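/- arXiv:2407.14907 — 2 statements merged into one kernel-verified Lean document; each statement's English description precedes it below -/
import Mathlib

section
/- For every Boolean conjunctive query Q and every finite set Σ of frontier-one TGDs, there exists a Monadic Datalog query R that is a certain-answer rewriting of Q with respect to Σ: for every instance I, R holds on I if and only if I ∧ Σ ⊨ Q. -/
namespace MonDetPaper

/-- Relation symbols (a schema is a finite set of these). -/
abbrev RelSym : Type := ℕ
/-- First-order variables. -/
abbrev Var : Type := ℕ

/-- An atom (or fact): a relation symbol together with a list of arguments. -/
abbrev Atom (α : Type) : Type := RelSym × List α

/-- An instance over domain `D`: a (possibly infinite) set of facts. -/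
abbrev Inst (D : Type) : Type := Set (Atom D)

/-- Apply a map on domain elements to an atom. -/
def mapAtom {α β : Type} (h : α → β) (a : Atom α) : Atom β := (a.1, a.2.map h)

/-- Image of an instance under a map on domain elements. -/
def mapInst {α β : Type} (h : α → β) (I : Inst α) : Inst β := (mapAtom h) '' I

/-- `h` is a homomorphism from `I` to `J`. -/
def isHom {α β : Type} (h : α → β) (I : Inst α) (J : Inst β) : Prop :=
  ∀ a ∈ I, mapAtom h a ∈ J

/-- The instance uses only relation symbols from schema `S`. -/
def overSchema {D : Type} (S : Finset RelSym) (I : Inst D) : Prop :=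
  ∀ a ∈ I, a.1 ∈ S

/-! ### Conjunctive queries -/

/-- A Boolean conjunctive query: a finite list of atoms over variables,
all of which are (implicitly) existentially quantified. -/
abbrev BCQ : Type := List (Atom Var)

def bcqHolds {D : Type} (q : BCQ) (I : Inst D) : Prop :=
  ∃ h : Var → D, ∀ a ∈ q, mapAtom h a ∈ I

def bcqOver (S : Finset RelSym) (q : BCQ) : Prop := ∀ a ∈ q, a.1 ∈ S

/-- The canonical database of a Boolean CQ. -/
def canondb (q : BCQ) : Inst Var := { a | a ∈ q }

/-- A conjunctive query with answer variables: a body together with the list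
of answer (free) variables. -/
abbrev CQ : Type := List (Atom Var) × List Var

def cqEval {D : Type} (q : CQ) (I : Inst D) : Set (List D) :=
  { t | ∃ h : Var → D, (∀ a ∈ q.1, mapAtom h a ∈ I) ∧ t = q.2.map h }

def cqOver (S : Finset RelSym) (q : CQ) : Prop := ∀ a ∈ q.1, a.1 ∈ S

/-- A union of conjunctive queries. -/
abbrev UCQ : Type := List CQ

def ucqEval {D : Type} (q : UCQ) (I : Inst D) : Set (List D) :=
  { t | ∃ d ∈ q, t ∈ cqEval d I }

def ucqOver (S : Finset RelSym) (q : UCQ) : Prop := ∀ d ∈ q, cqOver S d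

/-- A Boolean union of conjunctive queries. -/
abbrev BUCQ : Type := List BCQ

def bucqHolds {D : Type} (q : BUCQ) (I : Inst D) : Prop := ∃ d ∈ q, bcqHolds d I

def bucqOver (S : Finset RelSym) (q : BUCQ) : Prop := ∀ d ∈ q, bcqOver S d

/-! ### Datalog -/

/-- A Datalog rule: a head atom and a body (a list of atoms). -/
abbrev DatalogRule : Type := Atom Var × List (Atom Var)
abbrev DatalogProgram : Type := List DatalogRule
/-- A Datalog query: a program together with a distinguished goal predicate. -/
abbrev DatalogQuery : Type := DatalogProgram × RelSym

/-- The intensional predicates of a program: those appearing in rule heads. -/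
def isIDB (P : DatalogProgram) (r : RelSym) : Prop := ∃ ru ∈ P, ru.1.1 = r

def ruleHolds {D : Type} (r : DatalogRule) (J : Inst D) : Prop :=
  ∀ h : Var → D, (∀ a ∈ r.2, mapAtom h a ∈ J) → mapAtom h r.1 ∈ J

/-- The least extension of `I` satisfying all rules of `P`. -/
def dlFix {D : Type} (P : DatalogProgram) (I : Inst D) : Inst D :=
  ⋂₀ { J : Inst D | I ⊆ J ∧ ∀ r ∈ P, ruleHolds r J }

/-- Output of a Datalog query. -/
def dlEval {D : Type} (Q : DatalogQuery) (I : Inst D) : Set (List D) :=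
  { t | (Q.2, t) ∈ dlFix Q.1 I }

/-- A Boolean Datalog query holds when the 0-ary goal fact is derived. -/
def dlHolds {D : Type} (Q : DatalogQuery) (I : Inst D) : Prop :=
  (Q.2, ([] : List D)) ∈ dlFix Q.1 I

/-- Well-formedness of a Datalog query over base (EDB) schema `S`:
head predicates are disjoint from `S`, body atoms are over `S` or intensional,
and the goal is intensional. -/
def dlOver (S : Finset RelSym) (Q : DatalogQuery) : Prop :=
  (∀ r ∈ Q.1, r.1.1 ∉ S ∧ ∀ a ∈ r.2, a.1 ∈ S ∨ isIDB Q.1 a.1) ∧ isIDB Q.1 Q.2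

/-- The goal predicate is 0-ary (Boolean query). -/
def dlBoolean (Q : DatalogQuery) : Prop :=
  ∀ r ∈ Q.1, r.1.1 = Q.2 → r.1.2 = []

/-- Monadic Datalog: every intensional predicate is unary
(except the 0-ary goal of a Boolean query). -/
def isMDL (Q : DatalogQuery) : Prop :=
  ∀ r ∈ Q.1, (r.1.1 = Q.2 ∧ r.1.2 = []) ∨ r.1.2.length = 1

/-- Frontier-guarded Datalog over EDB schema `S`: every rule body contains
an EDB atom containing all head variables. -/
def isFGDL (S : Finset RelSym) (Q : DatalogQuery) : Prop :=
  ∀ r ∈ Q.1, ∃ a ∈ r.2, a.1 ∈ S ∧ ∀ x ∈ r.1.2, x ∈ a.2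

/-- Extensionally-connected Datalog: in each rule, the graph on the head
variables whose edges join variables co-occurring in an EDB body atom
is connected. -/
def isEC (S : Finset RelSym) (Q : DatalogQuery) : Prop :=
  ∀ r ∈ Q.1, ∀ x ∈ r.1.2, ∀ y ∈ r.1.2,
    Relation.ReflTransGen (fun u v => ∃ a ∈ r.2, a.1 ∈ S ∧ u ∈ a.2 ∧ v ∈ a.2) x y

/-! ### Existential rules (TGDs) -/

/-- A tuple-generating dependency: body and head, each a list of atoms.
Head variables not occurring in the body are existentially quantified. -/
abbrev TGD : Type := List (Atom Var) × List (Atom Var)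

def varsIn (l : List (Atom Var)) : Set Var := { x | ∃ a ∈ l, x ∈ a.2 }

def tgdHolds {D : Type} (τ : TGD) (I : Inst D) : Prop :=
  ∀ h : Var → D, (∀ a ∈ τ.1, mapAtom h a ∈ I) →
    ∃ h' : Var → D, (∀ x ∈ varsIn τ.1, h' x = h x) ∧ ∀ a ∈ τ.2, mapAtom h' a ∈ I

def sigmaHolds {D : Type} (sg : List TGD) (I : Inst D) : Prop :=
  ∀ τ ∈ sg, tgdHolds τ I

def tgdOver (S : Finset RelSym) (τ : TGD) : Prop :=
  (∀ a ∈ τ.1, a.1 ∈ S) ∧ (∀ a ∈ τ.2, a.1 ∈ S)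

/-- The frontier: variables occurring both in body and head. -/
def frontier (τ : TGD) : Set Var := varsIn τ.1 ∩ varsIn τ.2

/-- A linear TGD has a single body atom. -/
def linearTGD (τ : TGD) : Prop := τ.1.length = 1

/-- A frontier-one TGD has (at most) one frontier variable. -/
def frontierOne (τ : TGD) : Prop := (frontier τ).Subsingleton

/-- A frontier-guarded TGD: some body atom contains all frontier variables. -/
def frontierGuarded (τ : TGD) : Prop := ∃ a ∈ τ.1, ∀ x ∈ frontier τ, x ∈ a.2

/-- A full TGD has no existentially quantified head variables. -/
def fullTGD (τ : TGD) : Prop := varsIn τ.2 ⊆ varsIn τ.1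

/-- A Unary Inclusion Dependency: a frontier-one linear TGD with no
repeated variables (and no constants). -/
def isUID (τ : TGD) : Prop :=
  linearTGD τ ∧ frontierOne τ ∧ (∀ a ∈ τ.1, a.2.Nodup) ∧ (∀ a ∈ τ.2, a.2.Nodup)

/-! ### Views -/

abbrev CQViews : Type := List (RelSym × CQ)
abbrev UCQViews : Type := List (RelSym × UCQ)
abbrev DLViews : Type := List (RelSym × DatalogQuery)

def cqViewImage {D : Type} (V : CQViews) (I : Inst D) : Inst D :=
  { a | ∃ vd ∈ V, vd.1 = a.1 ∧ a.2 ∈ cqEval vd.2 I }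

def ucqViewImage {D : Type} (V : UCQViews) (I : Inst D) : Inst D :=
  { a | ∃ vd ∈ V, vd.1 = a.1 ∧ a.2 ∈ ucqEval vd.2 I }

def dlViewImage {D : Type} (V : DLViews) (I : Inst D) : Inst D :=
  { a | ∃ vd ∈ V, vd.1 = a.1 ∧ a.2 ∈ dlEval vd.2 I }

/-! ### Monotonic determinacy and rewritings -/

/-- `holdsQ` is monotonically determined over the views (given by the view-image
operator `vim`) with respect to the rules `sg`, over all (possibly infinite)
instances over schema `S`. -/
def monDet (S : Finset RelSym)
    (holdsQ : (D : Type) → Inst D → Prop)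
    (vim : (D : Type) → Inst D → Inst D)
    (sg : List TGD) : Prop :=
  ∀ (D : Type) (I I' : Inst D), overSchema S I → overSchema S I' →
    sigmaHolds sg I → sigmaHolds sg I' →
    vim D I ⊆ vim D I' → holdsQ D I → holdsQ D I'

/-- Monotonic determinacy over finite instances. -/
def monDetFin (S : Finset RelSym)
    (holdsQ : (D : Type) → Inst D → Prop)
    (vim : (D : Type) → Inst D → Inst D)
    (sg : List TGD) : Prop :=
  ∀ (D : Type) (I I' : Inst D), I.Finite → I'.Finite →
    overSchema S I → overSchema S I' →
    sigmaHolds sg I → sigmaHolds sg I' →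
    vim D I ⊆ vim D I' → holdsQ D I → holdsQ D I'

/-- `holdsR` (a Boolean query over the view schema) is a rewriting of the
Boolean query `holdsQ` w.r.t. the views `vim` and rules `sg`:
on every instance satisfying the rules, evaluating the rewriting on the view
image gives the value of the query. -/
def isRewriting (S : Finset RelSym)
    (holdsQ : (D : Type) → Inst D → Prop)
    (vim : (D : Type) → Inst D → Inst D)
    (sg : List TGD)
    (holdsR : (D : Type) → Inst D → Prop) : Prop :=
  ∀ (D : Type) (I : Inst D), overSchema S I → sigmaHolds sg I →
    (holdsR D (vim D I) ↔ holdsQ D I)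

/-- The finite-instance variant of being a rewriting. -/
def isRewritingFin (S : Finset RelSym)
    (holdsQ : (D : Type) → Inst D → Prop)
    (vim : (D : Type) → Inst D → Inst D)
    (sg : List TGD)
    (holdsR : (D : Type) → Inst D → Prop) : Prop :=
  ∀ (D : Type) (I : Inst D), I.Finite → overSchema S I → sigmaHolds sg I →
    (holdsR D (vim D I) ↔ holdsQ D I)

/-! ### Universal models (the chase), certain answers -/

/-- `C` (with embedding `ι` of the domain of `I`) is a chase/universal model of
`I` with respect to the rules `sg`: it contains a homomorphic image of `I`,
satisfies the rules, and maps homomorphically (compatibly) into every instance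
satisfying the rules and containing a homomorphic image of `I`. -/
def isUnivModel (sg : List TGD) {D E : Type} (I : Inst D) (C : Inst E) (ι : D → E) : Prop :=
  isHom ι I C ∧ sigmaHolds sg C ∧
  ∀ (F : Type) (J : Inst F) (f : D → F), isHom f I J → sigmaHolds sg J →
    ∃ g : E → F, isHom g C J ∧ ∀ d, g (ι d) = f d

/-- `I ∧ sg ⊨ Q`: the Boolean query `holdsQ` holds in every instance (over `S`)
containing (a copy of) `I` and satisfying the rules `sg`. -/
def certain (S : Finset RelSym) (sg : List TGD)
    (holdsQ : (E : Type) → Inst E → Prop) {D : Type} (I : Inst D) : Prop :=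
  ∀ (E : Type) (e : D → E), Function.Injective e →
    ∀ J : Inst E, overSchema S J → mapInst e I ⊆ J → sigmaHolds sg J → holdsQ E J

/-! ### CQ approximations of a Datalog query -/

/-- A CQ approximation of Datalog query `Q`: a Boolean CQ over the base schema
contained in `Q` (Datalog queries are unions of their CQ approximations). -/
def isCQApprox (S : Finset RelSym) (Q : DatalogQuery) (q : BCQ) : Prop :=
  bcqOver S q ∧
  ∀ (D : Type) (I : Inst D), overSchema S I → bcqHolds q I → dlHolds Q I

/-! ### Backward view mapping for UCQ views -/

/-- Assignment used to instantiate the chosen CQ disjunct `q` for the view fact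
`a`: answer variables are identified with the corresponding entries of the fact
tuple, all other variables become fresh nulls tagged by `a`. -/
def backAssign {D : Type} (a : Atom D) (q : CQ) (x : Var) : D ⊕ (Atom D × Var) :=
  if x ∈ q.2 then
    match a.2[q.2.idxOf x]? with
    | some d => Sum.inl d
    | none => Sum.inr (a, x)
  else Sum.inr (a, x)

/-- `BackV_V(J)`: the set of base-schema instances obtained by choosing, for
each view fact of `J`, one CQ disjunct of the corresponding view definition and
adding its canonical database, with answer variables identified with the fact's
tuple and all other variables replaced by fresh nulls. -/
def backV {D : Type} (V : UCQViews) (J : Inst D) : Set (Inst (D ⊕ (Atom D × Var))) :=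
  { K | ∃ choice : Atom D → CQ,
      (∀ a ∈ J, ∃ vd ∈ V, vd.1 = a.1 ∧ choice a ∈ vd.2 ∧ (choice a).2.length = a.2.length) ∧
      K = { b | ∃ a ∈ J, ∃ c ∈ (choice a).1, b = mapAtom (backAssign a (choice a)) c } }

/-! ### Q-entailing view instances -/

/-- A view-schema instance `J` is Q-entailing w.r.t. rules `sg` and the views
(given by view image operator `vim`): every instance over `S` satisfying the
rules whose view image contains (a copy of) `J` satisfies the query. -/
def qEntailing (S : Finset RelSym) (sg : List TGD)
    (vim : (E : Type) → Inst E → Inst E)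
    (holdsQ : (E : Type) → Inst E → Prop)
    {D : Type} (J : Inst D) : Prop :=
  ∀ (E : Type) (e : D → E), Function.Injective e →
    ∀ I : Inst E, overSchema S I → sigmaHolds sg I →
      mapInst e J ⊆ vim E I → holdsQ E I


/-! ### Auxiliary development for Statement 1 -/

section Statement1
open Classical

noncomputable section

variable (S : Finset RelSym) (q : BCQ) (sg : List TGD)

/-- Atoms from which pool queries are built: atoms of `q` and of rule bodies. -/
def allBase : List (Atom ℕ) := q ++ sg.flatMap (fun τ => τ.1)

/-- All atoms of `q` and `sg` (used to pick fresh variables). -/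
def allAtoms : List (Atom ℕ) := q ++ sg.flatMap (fun τ => τ.1 ++ τ.2)

/-- A bound strictly above every variable occurring in `q` or `sg`. -/
def varBound : ℕ := ((allAtoms q sg).flatMap (fun a => a.2)).foldr max 0 + 1

/-- A fresh variable used as the pin of pinned residual queries. -/
def zst : ℕ := varBound q sg

/-- A fresh variable never occurring in pool queries (global pin). -/
def zG : ℕ := varBound q sg + 1

/-- Variables allowed in pool atoms. -/
def V : Finset ℕ := ((allAtoms q sg).flatMap (fun a => a.2)).toFinset ∪ {zst q sg}

/-- Maximal length of a pool query. -/
def maxlen : ℕ := max q.length ((sg.map (fun τ => τ.1.length)).foldr max 0)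

/-- Fresh palette variables for unlinked group arguments. -/
def palV (j : ℕ) : ℕ := varBound q sg + 2 + j

/-- Variables allowed as pins and arguments. -/
def VJ : Finset ℕ := V q sg ∪ {zG q sg} ∪ (Finset.range (maxlen q sg)).image (palV q sg)


/-- Maximal arity of a pool atom. -/
def maxar : ℕ := ((allBase q sg).map (fun a => a.2.length)).foldr max 0

/-- Pool atoms. -/
def PoolAtom : Set (Atom ℕ) :=
  {a | a.1 ∈ S ∧ (∃ b ∈ allBase q sg, b.1 = a.1 ∧ b.2.length = a.2.length) ∧
      ∀ x ∈ a.2, x ∈ V q sg}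

/-- Pool queries. -/
def PoolQ : Set BCQ := {r | r.length ≤ maxlen q sg ∧ ∀ a ∈ r, a ∈ PoolAtom S q sg}

/-- Pool judgments: a pool query together with a pin variable. -/
def Pool1 : Set (BCQ × ℕ) := {p | p.1 ∈ PoolQ S q sg ∧ p.2 ∈ VJ q sg}

lemma finite_bdd_lists {α : Type*} (n : ℕ) (s : Set α) (hs : s.Finite) :
    {l : List α | l.length ≤ n ∧ ∀ a ∈ l, a ∈ s}.Finite := by
  induction n with
  | zero =>
    apply Set.Finite.subset (Set.finite_singleton ([] : List α))
    rintro l ⟨hl, -⟩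
    simp [List.length_eq_zero_iff.mp (Nat.le_zero.mp hl)]
  | succ n ih =>
    apply Set.Finite.subset (Set.Finite.insert ([] : List α)
      ((hs.prod ih).image (fun p => p.1 :: p.2)))
    rintro l ⟨hl, hmem⟩
    cases l with
    | nil => exact Set.mem_insert _ _
    | cons a t =>
      refine Set.mem_insert_of_mem _ ⟨(a, t), ⟨hmem a (by simp), ?_, ?_⟩, rfl⟩
      · simpa using Nat.succ_le_succ_iff.mp (by simpa using hl)
      · exact fun x hx => hmem x (by simp [hx])

lemma mem_le_foldr_max (l : List ℕ) (x : ℕ) (hx : x ∈ l) : x ≤ l.foldr max 0 := by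
  induction l with
  | nil => simp at hx
  | cons a t ih =>
    rcases List.mem_cons.mp hx with h | h
    · simp [h, List.foldr]
    · exact le_trans (ih h) (by simp [List.foldr])

lemma poolAtom_finite : (PoolAtom S q sg).Finite := by
  apply Set.Finite.subset (Set.Finite.prod S.finite_toSet
    (finite_bdd_lists (maxar q sg) (↑(V q sg) : Set ℕ) (V q sg).finite_toSet))
  rintro ⟨r, args⟩ ⟨h1, ⟨b, hb, -, hlen⟩, h3⟩
  refine ⟨h1, ?_, fun x hx => h3 x hx⟩
  rw [← hlen]
  exact mem_le_foldr_max _ _ (by exact List.mem_map_of_mem hb)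

lemma poolQ_finite : (PoolQ S q sg).Finite :=
  finite_bdd_lists _ _ (poolAtom_finite S q sg)

lemma pool1_finite : (Pool1 S q sg).Finite := by
  apply Set.Finite.subset ((poolQ_finite S q sg).prod (VJ q sg).finite_toSet)
  rintro ⟨r, u⟩ ⟨h1, h2⟩; exact ⟨h1, h2⟩

/-! #### Encodings, the certain-answer interpretation, and the program -/

def base0 : ℕ := S.sup id + 1

def gSym : ℕ := base0 S

def encA (p : BCQ × ℕ) : ℕ := base0 S + 1 + Encodable.encode p

lemma not_mem_S_of_ge {n : ℕ} (hn : base0 S ≤ n) : n ∉ S := by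
  intro h
  have := Finset.le_sup (f := id) h
  simp only [id] at this
  simp only [base0] at hn
  omega

lemma gSym_not_mem : gSym S ∉ S := not_mem_S_of_ge S le_rfl

lemma encA_not_mem (p : BCQ × ℕ) : encA S p ∉ S :=
  not_mem_S_of_ge S (by simp only [encA, base0]; omega)

lemma encA_ne_g (p : BCQ × ℕ) : encA S p ≠ gSym S := by
  simp [encA, gSym, base0]; omega

lemma encA_inj {p p' : BCQ × ℕ} (h : encA S p = encA S p') : p = p' := by
  have : Encodable.encode p = Encodable.encode p' := by
    simp only [encA] at h; omega
  exact Encodable.encode_injective this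

/-- `r` matched in `J` with pin `v ↦ d`. -/
def matchedIn {E : Type} (J : Inst E) (r : BCQ) (v : ℕ) (d : E) : Prop :=
  ∃ h : ℕ → E, (∀ a ∈ r, mapAtom h a ∈ J) ∧ h v = d

lemma matchedIn_repin {E : Type} {J : Inst E} {r : BCQ} {v : ℕ} {d : E}
    (h : matchedIn J r v d) (hv : ∀ a ∈ r, v ∉ a.2) (d' : E) :
    matchedIn J r v d' := by
  obtain ⟨f, hf, -⟩ := h
  refine ⟨fun z => if z = v then d' else f z, fun a ha => ?_, by simp⟩
  have : mapAtom (fun z => if z = v then d' else f z) a = mapAtom f a := by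
    unfold mapAtom
    refine congrArg _ (List.map_congr_left fun x hx => ?_)
    have : x ≠ v := fun e => hv a ha (e ▸ hx)
    simp [this]
  rw [this]; exact hf a ha

/-- The query `r`, pinned at `v ↦ d`, is certain for `I`. -/
def certAt {D : Type} (I : Inst D) (r : BCQ) (v : ℕ) (d : D) : Prop :=
  ∀ (E : Type) (e : D → E), Function.Injective e →
    ∀ J : Inst E, overSchema S J → mapInst e I ⊆ J → sigmaHolds sg J →
      matchedIn J r v (e d)

/-- The intended ("certain") interpretation of the program on instance `I`. -/
def CI {D : Type} (I : Inst D) : Inst D :=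
  I ∪ {α | ∃ p d₁, α = (encA S p, [d₁]) ∧ certAt S sg I p.1 p.2 d₁} ∪
    {α | α = (gSym S, []) ∧ certain S sg (fun _ J => bcqHolds q J) I}

lemma subset_CI {D : Type} (I : Inst D) : I ⊆ CI S q sg I :=
  fun α h => Or.inl (Or.inl h)

lemma CI_extract_A {D : Type} {I : Inst D} (hover : overSchema S I) {p : BCQ × ℕ}
    {d₁ : D} (h : (encA S p, [d₁]) ∈ CI S q sg I) : certAt S sg I p.1 p.2 d₁ := by
  rcases h with (h | h) | h
  · exact absurd (hover _ h) (encA_not_mem S p)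
  · obtain ⟨p', d', he, hc⟩ := h
    have h1 : encA S p' = encA S p := (Prod.mk.injEq _ _ _ _ ▸ he).1.symm
    have h2 : p' = p := encA_inj S h1
    have h3 : d' = d₁ := by
      have := (Prod.mk.injEq _ _ _ _ ▸ he).2
      simpa using this.symm
    rw [← h2, ← h3]; exact hc
  · exact absurd h.1 (by intro e; simpa using congrArg (fun α : Atom D => α.2.length) e)

lemma CI_extract_goal {D : Type} {I : Inst D} (hover : overSchema S I)
    (h : (gSym S, ([] : List D)) ∈ CI S q sg I) :
    certain S sg (fun _ J => bcqHolds q J) I := by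
  rcases h with (h | h) | h
  · exact absurd (hover _ h) (gSym_not_mem S)
  · obtain ⟨p', d', he, -⟩ := h
    exact absurd ((Prod.mk.injEq _ _ _ _ ▸ he).1) (Ne.symm (encA_ne_g S p'))
  · exact h.2

lemma CI_extract_edb {D : Type} {I : Inst D} {α : Atom D} (hα : α ∈ CI S q sg I)
    (hS : α.1 ∈ S) : α ∈ I := by
  rcases hα with (h | h) | h
  · exact h
  · obtain ⟨p', d', he, -⟩ := h
    exact absurd hS (by rw [he]; exact encA_not_mem S p')
  · exact absurd hS (by rw [h.1]; exact gSym_not_mem S)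

/-- A rule is (certain-)sound if the certain interpretation satisfies it, for
every instance over the schema. -/
def soundRule (ru : DatalogRule) : Prop :=
  ∀ (D : Type) (I : Inst D), overSchema S I → ruleHolds ru (CI S q sg I)

def NB : ℕ := (pool1_finite S q sg).toFinset.card + 2 * maxlen q sg + 3

def IDBAtomS : Set (Atom ℕ) :=
  {a | ∃ p ∈ Pool1 S q sg, ∃ u ∈ VJ q sg, a = (encA S p, [u])}

lemma IDBAtomS_finite : (IDBAtomS S q sg).Finite := by
  have : IDBAtomS S q sg ⊆
      (fun pu : (BCQ × ℕ) × ℕ => ((encA S pu.1, [pu.2]) : Atom ℕ)) ''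
        ((Pool1 S q sg) ×ˢ (↑(VJ q sg) : Set ℕ)) := by
    rintro a ⟨p, hp, u, hu, rfl⟩
    exact ⟨(p, u), ⟨hp, hu⟩, rfl⟩
  exact Set.Finite.subset (Set.Finite.image _ ((pool1_finite S q sg).prod
    (VJ q sg).finite_toSet)) this

def HeadS : Set (Atom ℕ) := insert (gSym S, ([] : List ℕ)) (IDBAtomS S q sg)

def BodyS : Set (List (Atom ℕ)) :=
  {l | l.length ≤ NB S q sg ∧ ∀ a ∈ l, a ∈ PoolAtom S q sg ∪ IDBAtomS S q sg}

def CandS : Set DatalogRule := {ru | ru.1 ∈ HeadS S q sg ∧ ru.2 ∈ BodyS S q sg}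

lemma candS_finite : (CandS S q sg).Finite := by
  have h1 : (HeadS S q sg).Finite := Set.Finite.insert _ (IDBAtomS_finite S q sg)
  have h2 : (BodyS S q sg).Finite :=
    finite_bdd_lists _ _ ((poolAtom_finite S q sg).union (IDBAtomS_finite S q sg))
  exact Set.Finite.subset (h1.prod h2) (fun ru h => ⟨h.1, h.2⟩)

def RSet : Set DatalogRule := {ru | ru ∈ CandS S q sg ∧ soundRule S q sg ru}

lemma rset_finite : (RSet S q sg).Finite :=
  Set.Finite.subset (candS_finite S q sg) (fun _ h => h.1)

def Prog : DatalogProgram := (rset_finite S q sg).toFinset.toList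

def RQ : DatalogQuery := (Prog S q sg, gSym S)

lemma mem_Prog {ru : DatalogRule} :
    ru ∈ Prog S q sg ↔ ru ∈ CandS S q sg ∧ soundRule S q sg ru := by
  simp [Prog, Set.Finite.mem_toFinset, RSet]

lemma dlFix_subset_CI {D : Type} (I : Inst D) (hover : overSchema S I) :
    dlFix (Prog S q sg) I ⊆ CI S q sg I := by
  apply Set.sInter_subset_of_mem
  refine ⟨subset_CI S q sg I, fun r hr => ?_⟩
  exact ((mem_Prog S q sg).mp hr).2 D I hover

/-- Easy direction: if the program derives the goal, the query is certain. -/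
lemma easy_dir {D : Type} (I : Inst D) (hover : overSchema S I)
    (h : dlHolds (RQ S q sg) I) : certain S sg (fun _ J => bcqHolds q J) I := by
  have : (gSym S, ([] : List D)) ∈ CI S q sg I :=
    dlFix_subset_CI S q sg I hover h
  exact CI_extract_goal S q sg hover this

/-! #### The tree chase -/

/-- Domain of the chase: base elements and null addresses. -/
def Om (D : Type) : Type := Option D × List (ℕ × ℕ)

def iotaC {D : Type} (d : D) : Om D := (some d, [])

lemma iotaC_inj {D : Type} : Function.Injective (iotaC (D := D)) := by
  intro a b h
  simpa [iotaC, Om] using congrArg Prod.fst h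

def childC {D : Type} (c : Om D) (s : ℕ × ℕ) : Om D := (c.1, c.2 ++ [s])

/-- The `i`-th TGD of `sg`. -/
def tauN (i : ℕ) : TGD := sg.getD i ([], [])

lemma tauN_mem {i : ℕ} (hi : i < sg.length) : tauN sg i ∈ sg := by
  rw [tauN, List.getD_eq_getElem sg ([], []) hi]
  exact List.getElem_mem _

/-- Witness assignment for the bag of TGD `i` attached at `c`. -/
def wmap {D : Type} (c : Om D) (i : ℕ) : ℕ → Om D :=
  fun y => if y ∈ varsIn (tauN sg i).1 then c else childC c (i, y)

/-- The facts of the bag of TGD `i` attached at `c`. -/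
def bagFacts {D : Type} (c : Om D) (i : ℕ) : Inst (Om D) :=
  {α | ∃ b ∈ (tauN sg i).2, α = mapAtom (wmap sg c i) b}

/-- Chase stages. -/
def chaseC {D : Type} (I : Inst D) : ℕ → Inst (Om D)
  | 0 => mapInst iotaC I
  | (k+1) => chaseC I k ∪
      {α | ∃ i c, (i < sg.length ∧ ∃ h : ℕ → Om D,
          (∀ a ∈ (tauN sg i).1, mapAtom h a ∈ chaseC I k) ∧
          ∀ y ∈ frontier (tauN sg i), h y = c) ∧ α ∈ bagFacts sg c i}

/-- TGD `i` fires at `c` at stage `k`. -/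
def fires {D : Type} (I : Inst D) (i : ℕ) (c : Om D) (k : ℕ) : Prop :=
  i < sg.length ∧ ∃ h : ℕ → Om D,
    (∀ a ∈ (tauN sg i).1, mapAtom h a ∈ chaseC sg I k) ∧
    ∀ y ∈ frontier (tauN sg i), h y = c

lemma chaseC_succ {D : Type} (I : Inst D) (k : ℕ) :
    chaseC sg I (k+1) = chaseC sg I k ∪
      {α | ∃ i c, fires sg I i c k ∧ α ∈ bagFacts sg c i} := rfl

lemma chaseC_mono {D : Type} (I : Inst D) {k k' : ℕ} (h : k ≤ k') :
    chaseC sg I k ⊆ chaseC sg I k' := by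
  induction k' with
  | zero => cases Nat.le_zero.mp h; exact fun _ h => h
  | succ n ih =>
    rcases Nat.le_succ_iff_eq_or_le.mp (by omega : k ≤ n + 1) with rfl | hle
    · exact fun _ h => h
    · exact fun α hα => Or.inl (ih hle hα)

/-- The full chase. -/
def chaseOm {D : Type} (I : Inst D) : Inst (Om D) := {α | ∃ k, α ∈ chaseC sg I k}

lemma chaseC_subset_Om {D : Type} (I : Inst D) (k : ℕ) :
    chaseC sg I k ⊆ chaseOm sg I := fun α h => ⟨k, h⟩

lemma exists_stage {D : Type} {I : Inst D} (r : List (Atom ℕ)) (f : ℕ → Om D)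
    (h : ∀ a ∈ r, mapAtom f a ∈ chaseOm sg I) :
    ∃ k, ∀ a ∈ r, mapAtom f a ∈ chaseC sg I k := by
  induction r with
  | nil => exact ⟨0, by simp⟩
  | cons a t ih =>
    obtain ⟨k1, hk1⟩ := ih (fun b hb => h b (by simp [hb]))
    obtain ⟨k2, hk2⟩ := h a (by simp)
    refine ⟨max k1 k2, fun b hb => ?_⟩
    rcases List.mem_cons.mp hb with rfl | hb
    · exact chaseC_mono sg I (le_max_right _ _) hk2
    · exact chaseC_mono sg I (le_max_left _ _) (hk1 b hb)

lemma chase_base_subset {D : Type} (I : Inst D) :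
    mapInst iotaC I ⊆ chaseOm sg I := fun α h => ⟨0, h⟩

lemma chase_overSchema (hsg : ∀ τ ∈ sg, tgdOver S τ ∧ frontierOne τ) {D : Type} (I : Inst D) (hover : overSchema S I) :
    overSchema S (chaseOm sg I) := by
  rintro α ⟨k, hk⟩
  induction k with
  | zero =>
    obtain ⟨β, hβ, rfl⟩ := hk
    exact hover β hβ
  | succ n ih =>
    rcases hk with hk | ⟨i, c, hf, b, hb, rfl⟩
    · exact ih hk
    · exact ((hsg _ (tauN_mem sg hf.1)).1).2 b hb

/-- The chase satisfies the TGDs. -/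
lemma chase_model (hsg : ∀ τ ∈ sg, tgdOver S τ ∧ frontierOne τ) {D : Type} (I : Inst D) : sigmaHolds sg (chaseOm sg I) := by
  intro τ hτ h hbody
  obtain ⟨i, hi, hig⟩ := List.mem_iff_getElem.mp hτ
  have htau : tauN sg i = τ := by rw [tauN, List.getD_eq_getElem sg ([], []) hi, hig]
  obtain ⟨k, hk⟩ := exists_stage sg τ.1 h hbody
  set c : Om D := if hne : (frontier τ).Nonempty then h hne.choose else ((none, []) : Om D)
    with hc
  have hfire : fires sg I i c k := by
    refine ⟨hi, h, by rw [htau]; exact hk, ?_⟩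
    intro y hy
    rw [htau] at hy
    have hne : (frontier τ).Nonempty := ⟨y, hy⟩
    have : y = hne.choose := (hsg τ hτ).2 hy hne.choose_spec
    rw [hc]; exact (congrArg h this).trans (dif_pos (t := fun hne => h hne.choose) (e := fun _ => ((none, []) : Om D)) hne).symm
  refine ⟨fun y => if y ∈ varsIn τ.1 then h y else wmap sg c i y, ?_, ?_⟩
  · intro x hx; simp [hx]
  · intro b hb
    have : mapAtom (fun y => if y ∈ varsIn τ.1 then h y else wmap sg c i y) b
        = mapAtom (wmap sg c i) b := by
      unfold mapAtom
      refine congrArg _ (List.map_congr_left fun y hy => ?_)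
      by_cases hyb : y ∈ varsIn τ.1
      · have hyfr : y ∈ frontier τ := ⟨hyb, ⟨b, hb, hy⟩⟩
        have hne : (frontier τ).Nonempty := ⟨y, hyfr⟩
        have h1 : h y = c := by
          have : y = hne.choose := (hsg τ hτ).2 hyfr hne.choose_spec
          rw [hc]; exact (congrArg h this).trans (dif_pos (t := fun hne => h hne.choose) (e := fun _ => ((none, []) : Om D)) hne).symm
        simp only [if_pos hyb, h1]
        rw [wmap, htau, if_pos hyb]
      · simp only [if_neg hyb]
    rw [this]
    exact ⟨k + 1, Or.inr ⟨i, c, hfire, ⟨b, by rw [htau]; exact hb, rfl⟩⟩⟩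

/-- Structure of elements occurring in chase facts. -/
lemma elem_struct {D : Type} (I : Inst D) (k : ℕ) :
    ∀ α ∈ chaseC sg I k, ∀ x ∈ α.2,
      (∃ d, x = ((some d, []) : Om D)) ∨
      ∃ p' i y, x = ((x.1, p' ++ [(i, y)]) : Om D) ∧ ∃ k' < k, fires sg I i (x.1, p') k' := by
  induction k with
  | zero =>
    rintro α ⟨β, hβ, rfl⟩ x hx
    obtain ⟨d, -, rfl⟩ := List.mem_map.mp hx
    exact Or.inl ⟨d, rfl⟩
  | succ n ih =>
    rintro α (hα | ⟨i, c, hf, b, hb, rfl⟩) x hx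
    · rcases ih α hα x hx with h | ⟨p', i, y, hx', k', hk', hf⟩
      · exact Or.inl h
      · exact Or.inr ⟨p', i, y, hx', k', by omega, hf⟩
    · obtain ⟨y, hy, rfl⟩ := List.mem_map.mp hx
      by_cases hyv : y ∈ varsIn (tauN sg i).1
      · rw [wmap, if_pos hyv]
        obtain ⟨a, ha, hya⟩ := hyv
        obtain ⟨hi, g, hg, hfr⟩ := hf
        have hyfr : y ∈ frontier (tauN sg i) := ⟨⟨a, ha, hya⟩, ⟨b, hb, hy⟩⟩
        have hgc : g y = c := hfr y hyfr
        have : c ∈ (mapAtom g a).2 := by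
          rw [← hgc]; exact List.mem_map_of_mem (f := g) hya
        rcases ih (mapAtom g a) (hg a ha) c this with h | ⟨p', i', y', hx', k', hk', hf'⟩
        · exact Or.inl h
        · exact Or.inr ⟨p', i', y', hx', k', by omega, hf'⟩
      · rw [wmap, if_neg hyv]
        exact Or.inr ⟨c.2, i, y, rfl, n, by omega, by exact hf⟩

/-- Origin of chase facts. -/
lemma origin {D : Type} (I : Inst D) (k : ℕ) :
    ∀ α ∈ chaseC sg I k, α ∈ chaseC sg I 0 ∨
      ∃ i c, (∃ k' < k, fires sg I i c k') ∧ α ∈ bagFacts sg c i := by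
  induction k with
  | zero => exact fun α hα => Or.inl hα
  | succ n ih =>
    rintro α (hα | ⟨i, c, hf, hb⟩)
    · rcases ih α hα with h | ⟨i, c, ⟨k', hk', hf⟩, hb⟩
      · exact Or.inl h
      · exact Or.inr ⟨i, c, ⟨k', by omega, hf⟩, hb⟩
    · exact Or.inr ⟨i, c, ⟨n, by omega, hf⟩, hb⟩

/-! #### Helper lemmas on atoms, variables, pools -/

lemma mapAtom_comp {α β γ : Type} (f : α → β) (g : β → γ) (a : Atom α) :
    mapAtom g (mapAtom f a) = mapAtom (g ∘ f) a := by
  simp [mapAtom, List.map_map]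

lemma mapAtom_congr {α β : Type} {f g : α → β} {a : Atom α}
    (h : ∀ x ∈ a.2, f x = g x) : mapAtom f a = mapAtom g a := by
  unfold mapAtom
  exact congrArg _ (List.map_congr_left h)

lemma vars_lt (a : Atom ℕ) (ha : a ∈ allAtoms q sg) (z : ℕ) (hz : z ∈ a.2) :
    z < varBound q sg := by
  have hmem : z ∈ (allAtoms q sg).flatMap (fun a => a.2) :=
    List.mem_flatMap.mpr ⟨a, ha, hz⟩
  have := mem_le_foldr_max _ _ hmem
  simp only [varBound]; omega

lemma zst_fresh (a : Atom ℕ) (ha : a ∈ allAtoms q sg) : zst q sg ∉ a.2 :=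
  fun h => absurd (vars_lt q sg a ha _ h) (by simp [zst])

lemma zG_fresh (a : Atom ℕ) (ha : a ∈ allAtoms q sg) : zG q sg ∉ a.2 :=
  fun h => absurd (vars_lt q sg a ha _ h) (by simp [zG])

lemma zst_mem_V : zst q sg ∈ V q sg := by simp [V]

lemma zG_mem_VJ : zG q sg ∈ VJ q sg := by simp [VJ]

lemma zst_mem_VJ : zst q sg ∈ VJ q sg := by simp [VJ, V]

lemma palV_mem_VJ {j : ℕ} (hj : j < maxlen q sg) : palV q sg j ∈ VJ q sg := by
  simp only [VJ, Finset.mem_union, Finset.mem_image, Finset.mem_range]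
  exact Or.inr ⟨j, hj, rfl⟩

lemma var_mem_V {a : Atom ℕ} (ha : a ∈ allAtoms q sg) {z : ℕ} (hz : z ∈ a.2) :
    z ∈ V q sg := by
  simp only [V, Finset.mem_union, List.mem_toFinset]
  exact Or.inl (List.mem_flatMap.mpr ⟨a, ha, hz⟩)

lemma q_atoms_allAtoms {a : Atom ℕ} (ha : a ∈ q) : a ∈ allAtoms q sg := by
  simp [allAtoms, ha]

lemma body_atoms_allAtoms {τ : TGD} (hτ : τ ∈ sg) {a : Atom ℕ} (ha : a ∈ τ.1) :
    a ∈ allAtoms q sg := by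
  simp only [allAtoms, List.mem_append, List.mem_flatMap]
  exact Or.inr ⟨τ, hτ, by simp [ha]⟩

lemma q_atoms_allBase {a : Atom ℕ} (ha : a ∈ q) : a ∈ allBase q sg := by
  simp [allBase, ha]

lemma body_atoms_allBase {τ : TGD} (hτ : τ ∈ sg) {a : Atom ℕ} (ha : a ∈ τ.1) :
    a ∈ allBase q sg := by
  simp only [allBase, List.mem_append, List.mem_flatMap]
  exact Or.inr ⟨τ, hτ, ha⟩

lemma q_len_le : q.length ≤ maxlen q sg := le_max_left _ _

lemma body_len_le {τ : TGD} (hτ : τ ∈ sg) : τ.1.length ≤ maxlen q sg := by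
  have h1 : τ.1.length ∈ sg.map (fun τ => τ.1.length) :=
    List.mem_map_of_mem (f := fun τ : TGD => τ.1.length) hτ
  exact le_trans (mem_le_foldr_max _ _ h1) (le_max_right _ _)

lemma bag_elems {D : Type} {c : Om D} {i : ℕ} {α : Atom (Om D)}
    (hα : α ∈ bagFacts sg c i) {x : Om D} (hx : x ∈ α.2) :
    x = c ∨ ∃ s, x = childC c s := by
  obtain ⟨b, hb, rfl⟩ := hα
  obtain ⟨y, hy, rfl⟩ := List.mem_map.mp hx
  by_cases hyv : y ∈ varsIn (tauN sg i).1
  · exact Or.inl (by rw [wmap, if_pos hyv])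
  · exact Or.inr ⟨(i, y), by rw [wmap, if_neg hyv]⟩

/-! #### Matches, downward matches, region structure -/

/-- `r` matched at stage `k` with pin `v ↦ x`. -/
def matchedC {D : Type} (I : Inst D) (k : ℕ) (r : BCQ) (v : ℕ) (x : Om D) : Prop :=
  ∃ h : ℕ → Om D, (∀ a ∈ r, mapAtom h a ∈ chaseC sg I k) ∧ h v = x

/-- The root element for root tag `ro`. -/
def rootE {D : Type} (ro : Option D) : Om D := (ro, [])

/-- Strict region elements (the nulls of the tree with root tag `ro`). -/
def RES {D : Type} (ro : Option D) : Set (Om D) := {ω | ω.1 = ro ∧ ω.2 ≠ []}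

/-- The bag `(c,i)` is present within stage `k`. -/
def bagIn {D : Type} (I : Inst D) (k : ℕ) (c : Om D) (i : ℕ) : Prop :=
  ∃ k' < k, fires sg I i c k'

/-- A downward match of `r` into the tree with root tag `ro`, within stage `k`,
with pin `v` at the root and all other variables at nulls of the tree. -/
def downC {D : Type} (I : Inst D) (k : ℕ) (ro : Option D) (r : BCQ) (v : ℕ) : Prop :=
  ∃ h : ℕ → Om D, h v = rootE ro ∧
    (∀ z, (∃ a ∈ r, z ∈ a.2) → z ≠ v → h z ∈ RES ro) ∧
    ∀ a ∈ r, ∃ i c, (c : Om D).1 = ro ∧ bagIn sg I k c i ∧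
      mapAtom h a ∈ bagFacts sg c i

/-- All pool judgments matched at stage `k` pinned at the root `ro`. -/
def GammaS {D : Type} (I : Inst D) (k : ℕ) (ro : Option D) : Set (BCQ × ℕ) :=
  {p | p ∈ Pool1 S q sg ∧ matchedC sg I k p.1 p.2 (rootE ro)}

/-- Invariant for the reconstruction map at stage `j`. -/
def InvarP {D E'' : Type} (I : Inst D) (J'' : Inst E'') (ε : E'') (ro : Option D)
    (j : ℕ) (f : Om D → E'') : Prop :=
  f (rootE ro) = ε ∧
  ∀ i c, (c : Om D).1 = ro → (∃ k' < j, fires sg I i c k') →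
    ∀ α ∈ bagFacts sg c i, mapAtom f α ∈ J''

attribute [local instance] Classical.propDecidable

/-- The key reconstruction step: a region bag firing at stage `j` can be
simulated in any model `J''` satisfying the TGDs, given the invariant and the
premises about pinned pool judgments. -/
lemma step_lemma (hsg : ∀ τ ∈ sg, tgdOver S τ ∧ frontierOne τ)
    {D E'' : Type} (I : Inst D) (J'' : Inst E'') (ε : E'') (ro : Option D)
    (hJ'' : sigmaHolds sg J'') (k : ℕ)
    (PRE : ∀ p ∈ Pool1 S q sg,
      matchedC sg I (k-1) p.1 p.2 (rootE ro) → matchedIn J'' p.1 p.2 ε)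
    (j : ℕ) (hj : j < k) (f : Om D → E'') (hf : InvarP sg I J'' ε ro j f)
    (i : ℕ) (c : Om D) (hro : c.1 = ro) (hfire : fires sg I i c j) :
    ∃ hh : ℕ → E'', ∀ b ∈ (tauN sg i).2,
      mapAtom (fun y => if y ∈ varsIn (tauN sg i).1 then f c else hh y) b ∈ J'' := by
  obtain ⟨hi, g, hg, hfr⟩ := hfire
  have htmem : tauN sg i ∈ sg := tauN_mem sg hi
  set τ := tauN sg i with hτdef
  set inreg : Atom ℕ → Prop := fun a => ∃ i' c', (c' : Om D).1 = ro ∧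
    (∃ k' < j, fires sg I i' c' k') ∧ mapAtom g a ∈ bagFacts sg c' i' with hinregdef
  set σp : ℕ → ℕ := fun z => if g z = rootE ro then zst q sg else z with hσpdef
  set outq : BCQ := (τ.1.filter (fun a => decide (¬ inreg a))).map (mapAtom σp)
    with houtqdef
  have hfilmem : ∀ a, a ∈ τ.1.filter (fun a => decide (¬ inreg a)) ↔
      (a ∈ τ.1 ∧ ¬ inreg a) := by
    intro a; rw [List.mem_filter, decide_eq_true_eq]
  -- (c1) out atoms have no strict region elements
  have hc1 : ∀ a ∈ τ.1, ¬ inreg a → ∀ z ∈ a.2, g z ∉ RES ro := by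
    intro a ha hnin z hz hres
    have hfact : mapAtom g a ∈ chaseC sg I j := hg a ha
    have hgz : g z ∈ (mapAtom g a).2 := List.mem_map_of_mem (f := g) hz
    rcases origin sg I j _ hfact with h0 | ⟨i', c', hk', hbag⟩
    · obtain ⟨β, hβ, he⟩ := h0
      rw [← he] at hgz
      obtain ⟨d, -, hd⟩ := List.mem_map.mp hgz
      exact hres.2 (by rw [← hd]; rfl)
    · by_cases hroc : c'.1 = ro
      · exact hnin ⟨i', c', hroc, hk', hbag⟩
      · rcases bag_elems sg hbag hgz with he | ⟨s, he⟩
        · exact hroc (by rw [← he]; exact hres.1)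
        · exact hroc (by rw [← show (childC c' s).1 = c'.1 from rfl, ← he]; exact hres.1)
  -- pool membership of the out-part judgment
  have houtpool : ((outq, zst q sg) : BCQ × ℕ) ∈ Pool1 S q sg := by
    refine ⟨⟨?_, ?_⟩, zst_mem_VJ q sg⟩
    · rw [houtqdef, List.length_map]
      exact le_trans (List.length_filter_le _ _) (body_len_le q sg htmem)
    · intro a' ha'
      obtain ⟨a, hafil, rfl⟩ := List.mem_map.mp ha'
      obtain ⟨ha1, -⟩ := (hfilmem a).mp hafil
      refine ⟨(hsg τ htmem).1.1 a ha1, ⟨a, body_atoms_allBase q sg htmem ha1, rfl,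
        by simp [mapAtom]⟩, ?_⟩
      intro x hx
      obtain ⟨z, hz, rfl⟩ := List.mem_map.mp hx
      by_cases hgz : g z = rootE ro
      · rw [hσpdef]; simp only [if_pos hgz]; exact zst_mem_V q sg
      · rw [hσpdef]; simp only [if_neg hgz]
        exact var_mem_V q sg (body_atoms_allAtoms q sg htmem ha1) hz
  -- the out-part is matched at stage k-1, pinned at the root
  have hmout : matchedC sg I (k-1) outq (zst q sg) (rootE ro) := by
    refine ⟨fun z => if z = zst q sg then rootE ro else g z, ?_, by simp⟩
    intro a' ha'
    obtain ⟨a, hafil, rfl⟩ := List.mem_map.mp ha'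
    obtain ⟨ha1, -⟩ := (hfilmem a).mp hafil
    rw [mapAtom_comp]
    have heq : mapAtom ((fun z => if z = zst q sg then rootE ro else g z) ∘ σp) a
        = mapAtom g a := by
      apply mapAtom_congr; intro z hz
      by_cases hgz : g z = rootE ro
      · simp only [Function.comp, hσpdef, if_pos hgz, if_pos rfl]; exact hgz.symm
      · have hzne : z ≠ zst q sg := fun he => zst_fresh q sg a
          (body_atoms_allAtoms q sg htmem ha1) (he ▸ hz)
        simp only [Function.comp, hσpdef, if_neg hgz, if_neg hzne]
    rw [heq]
    exact chaseC_mono sg I (by omega) (hg a ha1)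
  obtain ⟨m', hm', hmpin⟩ := PRE _ houtpool hmout
  -- the assembled body match in J''
  set gg : ℕ → E'' := fun z => if g z = rootE ro then ε
    else if g z ∈ RES ro then f (g z) else m' z with hggdef
  have hggbody : ∀ a ∈ τ.1, mapAtom gg a ∈ J'' := by
    intro a ha
    by_cases hin : inreg a
    · obtain ⟨i', c', hroc, hk', hbag⟩ := hin
      have heq : mapAtom gg a = mapAtom f (mapAtom g a) := by
        rw [mapAtom_comp]; apply mapAtom_congr; intro z hz
        have hgz : g z ∈ (mapAtom g a).2 := List.mem_map_of_mem (f := g) hz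
        rcases bag_elems sg hbag hgz with he | ⟨s, he⟩
        · by_cases hcnil : c'.2 = []
          · have hce : g z = rootE ro := by
              rw [he]; rw [rootE]; exact Prod.ext hroc hcnil
            simp only [hggdef, if_pos hce, Function.comp]
            rw [hce, hf.1]
          · have hce : g z ∈ RES ro := by rw [he]; exact ⟨hroc, hcnil⟩
            have hne : g z ≠ rootE ro := by
              intro hh; rw [hh] at hce; exact hce.2 rfl
            simp only [hggdef, Function.comp, if_neg hne, if_pos hce]
        · have hce : g z ∈ RES ro := by
            rw [he]; exact ⟨hroc, by simp [childC]⟩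
          have hne : g z ≠ rootE ro := by
            intro hh; rw [hh] at hce; exact hce.2 rfl
          simp only [hggdef, Function.comp, if_neg hne, if_pos hce]
      rw [heq]
      exact hf.2 i' c' hroc hk' _ hbag
    · have hmema : mapAtom σp a ∈ outq :=
        List.mem_map_of_mem ((hfilmem a).mpr ⟨ha, hin⟩)
      have heq : mapAtom gg a = mapAtom m' (mapAtom σp a) := by
        rw [mapAtom_comp]; apply mapAtom_congr; intro z hz
        by_cases hgz : g z = rootE ro
        · simp only [hggdef, Function.comp, hσpdef, if_pos hgz, hmpin]
        · have hnres : g z ∉ RES ro := hc1 a ha hin z hz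
          simp only [hggdef, Function.comp, hσpdef, if_neg hgz, if_neg hnres]
      rw [heq]
      exact hm' _ hmema
  have hggfr : ∀ y ∈ frontier τ, gg y = f c := by
    intro y hy
    have hgy : g y = c := hfr y hy
    by_cases hcnil : c.2 = []
    · have hce : c = rootE ro := by rw [rootE]; exact Prod.ext hro hcnil
      have : g y = rootE ro := by rw [hgy, hce]
      simp only [hggdef, if_pos this]
      rw [← hf.1, hce]
    · have hce : g y ∈ RES ro := by rw [hgy]; exact ⟨hro, hcnil⟩
      have hne : g y ≠ rootE ro := by intro hh; rw [hh] at hce; exact hce.2 rfl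
      have hceC : c ∈ RES ro := ⟨hro, hcnil⟩
      simp only [hggdef, if_neg hne, hgy, if_pos hceC]
  obtain ⟨h', hagree, hheads⟩ := hJ'' τ htmem gg hggbody
  refine ⟨h', fun b hb => ?_⟩
  have heq : mapAtom (fun y => if y ∈ varsIn τ.1 then f c else h' y) b
      = mapAtom h' b := by
    apply mapAtom_congr; intro y hy
    by_cases hyv : y ∈ varsIn τ.1
    · have hyfr : y ∈ frontier τ := ⟨hyv, ⟨b, hb, hy⟩⟩
      simp only [if_pos hyv]
      rw [hagree y hyv, hggfr y hyfr]
    · simp only [if_neg hyv]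
  rw [heq]
  exact hheads b hb

lemma concat_inj {α : Type*} {l₁ l₂ : List α} {a b : α}
    (h : l₁ ++ [a] = l₂ ++ [b]) : l₁ = l₂ ∧ a = b := by
  have h' := congrArg List.reverse h
  simp only [List.reverse_append, List.reverse_cons, List.reverse_nil,
    List.nil_append, List.singleton_append] at h'
  obtain ⟨h1, h2⟩ := List.cons.injEq _ _ _ _ ▸ h'
  exact ⟨List.reverse_inj.mp h2, h1⟩

lemma childC_inj {D : Type} {c c' : Om D} {s s' : ℕ × ℕ}
    (h : childC c s = childC c' s') : c = c' ∧ s = s' := by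
  simp only [childC] at h
  obtain ⟨h1, h2⟩ := Prod.mk.injEq _ _ _ _ ▸ h
  obtain ⟨h3, h4⟩ := concat_inj h2
  exact ⟨Prod.ext h1 h3, h4⟩

lemma childC_ne_root {D : Type} {c : Om D} {s : ℕ × ℕ} {ro : Option D} :
    childC c s ≠ rootE ro := by
  intro h
  have := congrArg Prod.snd h
  simp [childC, rootE] at this

/-- Existence of the reconstruction map at every stage. -/
lemma invar_exists (hsg : ∀ τ ∈ sg, tgdOver S τ ∧ frontierOne τ)
    {D E'' : Type} (I : Inst D) (J'' : Inst E'') (ε : E'') (ro : Option D)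
    (hJ'' : sigmaHolds sg J'') (k : ℕ)
    (PRE : ∀ p ∈ Pool1 S q sg,
      matchedC sg I (k-1) p.1 p.2 (rootE ro) → matchedIn J'' p.1 p.2 ε) :
    ∀ j, j ≤ k → ∃ f, InvarP sg I J'' ε ro j f := by
  intro j
  induction j with
  | zero =>
    intro _
    exact ⟨fun _ => ε, rfl, fun i c _ hk => absurd hk (by rintro ⟨k', hk', -⟩; omega)⟩
  | succ j ih =>
    intro hjk
    obtain ⟨f, hf⟩ := ih (by omega)
    have hjk' : j < k := by omega
    -- chosen head witnesses for bags first firing at stage j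
    have hstep : ∀ (i : ℕ) (c : Om D), ∃ hh : ℕ → E'', c.1 = ro → fires sg I i c j →
        ∀ b ∈ (tauN sg i).2,
          mapAtom (fun y => if y ∈ varsIn (tauN sg i).1 then f c else hh y) b ∈ J'' := by
      intro i c
      by_cases h : c.1 = ro ∧ fires sg I i c j
      · obtain ⟨hh, hhh⟩ := step_lemma S q sg hsg I J'' ε ro hJ'' k PRE j hjk' f hf i c h.1 h.2
        exact ⟨hh, fun _ _ => hhh⟩
      · exact ⟨fun _ => ε, fun h1 h2 => absurd ⟨h1, h2⟩ h⟩
    choose CH hCH using hstep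
    -- the extended map
    set Cond : Om D → Prop := fun ω => ∃ p : (ℕ × ℕ) × Om D, (p.2 : Om D).1 = ro ∧
      ω = childC p.2 p.1 ∧ fires sg I p.1.1 p.2 j ∧ ∀ j' < j, ¬ fires sg I p.1.1 p.2 j'
      with hCond
    set f' : Om D → E'' := fun ω =>
      if H : Cond ω then
        CH (Classical.choose H).1.1 (Classical.choose H).2 (Classical.choose H).1.2
      else f ω
      with hf'
    -- positive evaluation
    have hEvalPos : ∀ (i y : ℕ) (c : Om D), c.1 = ro → fires sg I i c j →
        (∀ j' < j, ¬ fires sg I i c j') →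
        f' (childC c (i, y)) = CH i c y := by
      intro i y c hro hfj hmin
      have HC : Cond (childC c (i, y)) := ⟨((i, y), c), hro, rfl, hfj, hmin⟩
      simp only [hf']
      rw [dif_pos HC]
      obtain ⟨hro', heq, hfj', hmin'⟩ := Classical.choose_spec HC
      obtain ⟨hc, hs⟩ := childC_inj heq
      have hi' : i = (Classical.choose HC).1.1 := by rw [← hs]
      have hy' : y = (Classical.choose HC).1.2 := by rw [← hs]
      rw [← hc, ← hi', ← hy']
    have hEvalNeg : ∀ ω, ¬ Cond ω → f' ω = f ω := by
      intro ω h; simp only [hf']; rw [dif_neg h]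
    -- coherence for attachment points occurring in earlier chase facts
    have hOld : ∀ (x : Om D), (∃ α ∈ chaseC sg I j, x ∈ α.2) → f' x = f x := by
      rintro x ⟨α, hα, hx⟩
      rcases elem_struct sg I j α hα x hx with ⟨d, rfl⟩ | ⟨p', i'', y'', hxe, k'', hk'', hfk⟩
      · apply hEvalNeg
        rintro ⟨p, -, heq, -, -⟩
        have := congrArg Prod.snd heq
        simp [childC] at this
      · apply hEvalNeg
        rintro ⟨p, -, heq, hfj, hmin⟩
        rw [hxe] at heq
        have heq' : childC (x.1, p') (i'', y'') = childC p.2 p.1 := heq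
        obtain ⟨hc, hs⟩ := childC_inj heq'
        exact hmin k'' hk'' (by rw [← hc, ← hs]; exact hfk)
    refine ⟨f', ?_, ?_⟩
    · have : ¬ Cond (rootE ro) := by
        rintro ⟨p, -, heq, -, -⟩
        exact childC_ne_root heq.symm
      rw [hEvalNeg _ this]; exact hf.1
    · rintro i c hroc ⟨k', hk', hfk'⟩ α hαbag
      -- first firing stage of this bag
      have hex : ∃ k0, fires sg I i c k0 := ⟨k', hfk'⟩
      set j₀ := Nat.find hex with hj₀
      have hfj₀ : fires sg I i c j₀ := Nat.find_spec hex
      have hmin : ∀ j' < j₀, ¬ fires sg I i c j' := fun j' hj' => Nat.find_min hex hj'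
      have hj₀le : j₀ ≤ j := by
        have := Nat.find_min' hex hfk'
        omega
      -- f' agrees with f at the attachment point whenever it occurs in a fact
      have hfc : ∀ y ∈ varsIn (tauN sg i).1, (∃ b ∈ (tauN sg i).2, y ∈ b.2) →
          f' c = f c := by
        rintro y hyv ⟨b, hb, hyb⟩
        have hyfr : y ∈ frontier (tauN sg i) := ⟨hyv, ⟨b, hb, hyb⟩⟩
        obtain ⟨-, g, hg, hfr⟩ := hfj₀
        obtain ⟨a, ha, hya⟩ := hyv
        have hca : c ∈ (mapAtom g a).2 := by
          rw [← hfr y hyfr]; exact List.mem_map_of_mem (f := g) hya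
        apply hOld
        exact ⟨mapAtom g a, chaseC_mono sg I hj₀le (hg a ha), hca⟩
      obtain ⟨b, hb, rfl⟩ := hαbag
      rcases Nat.lt_or_ge j₀ j with hlt | hge
      · -- the bag fired before stage j: use the invariant for f
        have hfα : mapAtom f (mapAtom (wmap sg c i) b) ∈ J'' :=
          hf.2 i c hroc ⟨j₀, hlt, hfj₀⟩ _ ⟨b, hb, rfl⟩
        have heq : mapAtom f' (mapAtom (wmap sg c i) b)
            = mapAtom f (mapAtom (wmap sg c i) b) := by
          rw [mapAtom_comp, mapAtom_comp]
          apply mapAtom_congr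
          intro y hy
          simp only [Function.comp]
          by_cases hyv : y ∈ varsIn (tauN sg i).1
          · rw [wmap, if_pos hyv]
            exact hfc y hyv ⟨b, hb, hy⟩
          · rw [wmap, if_neg hyv]
            apply hEvalNeg
            rintro ⟨p, -, heq, hfj, hmin'⟩
            obtain ⟨hc, hs⟩ := childC_inj heq
            have hi'' : i = p.1.1 := by rw [← hs]
            exact hmin' j₀ hlt (by rw [← hi'', ← hc]; exact hfj₀)
        rw [heq]; exact hfα
      · -- the bag first fires exactly at stage j
        have hj₀j : j₀ = j := by omega
        have hCHspec := hCH i c hroc (hj₀j ▸ hfj₀) b hb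
        have heq : mapAtom f' (mapAtom (wmap sg c i) b)
            = mapAtom (fun y => if y ∈ varsIn (tauN sg i).1 then f c
                else CH i c y) b := by
          rw [mapAtom_comp]
          apply mapAtom_congr
          intro y hy
          simp only [Function.comp]
          by_cases hyv : y ∈ varsIn (tauN sg i).1
          · rw [wmap, if_pos hyv, if_pos hyv]
            exact hfc y hyv ⟨b, hb, hy⟩
          · rw [wmap, if_neg hyv, if_neg hyv]
            exact hEvalPos i y c hroc (hj₀j ▸ hfj₀) (hj₀j ▸ hmin)
        rw [heq]; exact hCHspec

/-- Reconstruction: a downward match transfers to any model satisfying the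
TGDs, given the pinned pool judgments one stage earlier. -/
lemma recon (hsg : ∀ τ ∈ sg, tgdOver S τ ∧ frontierOne τ)
    {D E'' : Type} (I : Inst D) (J'' : Inst E'') (ε : E'') (ro : Option D)
    (hJ'' : sigmaHolds sg J'') (k : ℕ)
    (PRE : ∀ p ∈ Pool1 S q sg,
      matchedC sg I (k-1) p.1 p.2 (rootE ro) → matchedIn J'' p.1 p.2 ε)
    (r : BCQ) (v : ℕ) (hd : downC sg I k ro r v) : matchedIn J'' r v ε := by
  obtain ⟨f, hInv⟩ := invar_exists S q sg hsg I J'' ε ro hJ'' k PRE k le_rfl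
  obtain ⟨h₀, hpin, -, hatoms⟩ := hd
  refine ⟨f ∘ h₀, fun a ha => ?_, by simp [Function.comp, hpin, hInv.1]⟩
  obtain ⟨i, c, hroc, ⟨k', hk', hfk⟩, hbag⟩ := hatoms a ha
  have : mapAtom (f ∘ h₀) a = mapAtom f (mapAtom h₀ a) := (mapAtom_comp _ _ _).symm
  rw [this]
  exact hInv.2 i c hroc ⟨k', hk', hfk⟩ _ hbag

/-! #### The rules used in the completeness argument -/

lemma matchedC_repin {D : Type} {I : Inst D} {k : ℕ} {r : BCQ} {v : ℕ} {x : Om D}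
    (h : matchedC sg I k r v x) (hv : ∀ a ∈ r, v ∉ a.2) (x' : Om D) :
    matchedC sg I k r v x' := by
  obtain ⟨f, hf, -⟩ := h
  refine ⟨fun z => if z = v then x' else f z, fun a ha => ?_, by simp⟩
  have heq : mapAtom (fun z => if z = v then x' else f z) a = mapAtom f a :=
    mapAtom_congr (fun z hz => by
      have : z ≠ v := fun e => hv a ha (e ▸ hz)
      simp [this])
  rw [heq]; exact hf a ha

/-- No chase fact contains the junk element `(none, [])`. -/
lemma no_junk_elem {D : Type} {I : Inst D} {k : ℕ} {α : Atom (Om D)}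
    (hα : α ∈ chaseC sg I k) {x : Om D} (hx : x ∈ α.2) :
    x ≠ ((none, []) : Om D) := by
  rcases elem_struct sg I k α hα x hx with ⟨d, rfl⟩ | ⟨p', i, y, hxe, -⟩
  · intro h; simpa using congrArg Prod.fst h
  · intro h
    rw [h] at hxe
    have := congrArg Prod.snd hxe
    simp at this

/-- The F2 (context) rule. -/
def f2Rule (t : BCQ) (u : ℕ) (Γ : Finset (BCQ × ℕ)) : DatalogRule :=
  ((encA S (t, u), [zG q sg]), Γ.toList.map (fun γ => (encA S γ, [zG q sg])))

lemma f2_sound (hsg : ∀ τ ∈ sg, tgdOver S τ ∧ frontierOne τ)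
    {D : Type} (I : Inst D) (k : ℕ) (ro : Option D) (t : BCQ) (u : ℕ)
    (Γ : Finset (BCQ × ℕ))
    (hcov : ∀ p ∈ Pool1 S q sg, matchedC sg I (k-1) p.1 p.2 (rootE ro) → p ∈ Γ)
    (hd : downC sg I k ro t u) :
    soundRule S q sg (f2Rule S q sg t u Γ) := by
  intro D₀ I₀ hover₀ hv hbody
  refine Or.inl (Or.inr ⟨(t, u), hv (zG q sg), by simp [mapAtom, f2Rule], ?_⟩)
  intro E'' e'' hinj J'' hoverJ hsubJ hsigJ
  have PRE : ∀ p ∈ Pool1 S q sg, matchedC sg I (k-1) p.1 p.2 (rootE ro) →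
      matchedIn J'' p.1 p.2 (e'' (hv (zG q sg))) := by
    intro p hp hm
    have hmem : ((encA S p, [zG q sg]) : Atom ℕ) ∈ (f2Rule S q sg t u Γ).2 :=
      List.mem_map_of_mem (Finset.mem_toList.mpr (hcov p hp hm))
    have hfact : ((encA S p, [hv (zG q sg)]) : Atom D₀) ∈ CI S q sg I₀ := by
      simpa [mapAtom] using hbody _ hmem
    exact CI_extract_A S q sg hover₀ hfact E'' e'' hinj J'' hoverJ hsubJ hsigJ
  exact recon S q sg hsg I J'' (e'' (hv (zG q sg))) ro hsigJ k PRE t u hd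

lemma pool1_card_le (Γ : Finset (BCQ × ℕ)) (hΓ : ∀ γ ∈ Γ, γ ∈ Pool1 S q sg) :
    Γ.card ≤ (pool1_finite S q sg).toFinset.card :=
  Finset.card_le_card (fun γ hγ => (Set.Finite.mem_toFinset _).mpr (hΓ γ hγ))

lemma f2_cand {t : BCQ} {u : ℕ} (ht : (t, u) ∈ Pool1 S q sg)
    (Γ : Finset (BCQ × ℕ)) (hΓ : ∀ γ ∈ Γ, γ ∈ Pool1 S q sg) :
    f2Rule S q sg t u Γ ∈ CandS S q sg := by
  constructor
  · exact Or.inr ⟨(t, u), ht, zG q sg, zG_mem_VJ q sg, rfl⟩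
  · constructor
    · simp only [f2Rule, List.length_map, Finset.length_toList]
      have := pool1_card_le S q sg Γ hΓ
      simp only [NB]; omega
    · intro a ha
      simp only [f2Rule, List.mem_map] at ha
      obtain ⟨γ, hγ, rfl⟩ := ha
      exact Or.inr ⟨γ, hΓ γ (Finset.mem_toList.mp hγ), zG q sg, zG_mem_VJ q sg, rfl⟩

/-- The empty-query rule. -/
def emptyRule (u : ℕ) : DatalogRule := ((encA S (([] : BCQ), u), [zG q sg]), [])

lemma emptyRule_mem {u : ℕ} (hu : u ∈ VJ q sg) :
    emptyRule S q sg u ∈ Prog S q sg := by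
  rw [mem_Prog]
  refine ⟨⟨Or.inr ⟨([], u), ⟨⟨by simp, by simp⟩, hu⟩, zG q sg, zG_mem_VJ q sg, rfl⟩,
    by simp [emptyRule], by simp [emptyRule]⟩, ?_⟩
  intro D₀ I₀ hover₀ hv hbody
  refine Or.inl (Or.inr ⟨([], u), hv (zG q sg), by simp [mapAtom, emptyRule], ?_⟩)
  intro E'' e'' hinj J'' hoverJ hsubJ hsigJ
  exact ⟨fun _ => e'' (hv (zG q sg)), by simp, rfl⟩

/-- The tautological rule, for IDB-ness. -/
lemma tautRule_mem {p : BCQ × ℕ} (hp : p ∈ Pool1 S q sg) {u : ℕ} (hu : u ∈ VJ q sg) :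
    (((encA S p, [u]), [((encA S p, [u]) : Atom ℕ)]) : DatalogRule) ∈ Prog S q sg := by
  rw [mem_Prog]
  refine ⟨⟨Or.inr ⟨p, hp, u, hu, rfl⟩, by simp only [List.length_singleton, NB]; omega,
    fun a ha => by
      simp only [List.mem_singleton] at ha
      exact ha ▸ Or.inr ⟨p, hp, u, hu, rfl⟩⟩, ?_⟩
  intro D₀ I₀ hover₀ hv hbody
  exact hbody _ (by simp)

/-- The goal rule. -/
def goalRule : DatalogRule :=
  ((gSym S, []), [((encA S (q, zG q sg), [zG q sg]) : Atom ℕ)])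

lemma q_mem_poolQ (hq : bcqOver S q) : q ∈ PoolQ S q sg := by
  refine ⟨q_len_le q sg, fun a ha => ⟨hq a ha, ⟨a, q_atoms_allBase q sg ha, rfl, rfl⟩,
    fun x hx => var_mem_V q sg (q_atoms_allAtoms q sg ha) hx⟩⟩

lemma goalRule_mem (hq : bcqOver S q) : goalRule S q sg ∈ Prog S q sg := by
  rw [mem_Prog]
  refine ⟨⟨Or.inl rfl, by simp only [goalRule, List.length_singleton, NB]; omega,
    fun a ha => by
      simp only [goalRule, List.mem_singleton] at ha
      exact ha ▸ Or.inr ⟨(q, zG q sg), ⟨q_mem_poolQ S q sg hq, zG_mem_VJ q sg⟩,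
        zG q sg, zG_mem_VJ q sg, rfl⟩⟩, ?_⟩
  intro D₀ I₀ hover₀ hv hbody
  have hfact : ((encA S (q, zG q sg), [hv (zG q sg)]) : Atom D₀) ∈ CI S q sg I₀ := by
    have hb := hbody ((encA S (q, zG q sg), [zG q sg]) : Atom ℕ) (by simp [goalRule])
    simpa [mapAtom] using hb
  have hcert := CI_extract_A S q sg hover₀ hfact
  refine Or.inr ⟨by simp [mapAtom, goalRule], ?_⟩
  intro E e hinj J hoverJ hsubJ hsigJ
  obtain ⟨m, hm, -⟩ := hcert E e hinj J hoverJ hsubJ hsigJ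
  exact ⟨m, hm⟩

/-- The F1 (splitting) rule is sound, given decomposition data. -/
lemma f1_sound {D : Type} (s : BCQ) (w : ℕ) (σ : ℕ → ℕ) (r0 : BCQ)
    (gl : List (BCQ × (BCQ × ℕ) × ℕ)) (hd : ℕ) (h : ℕ → Om D)
    (HS : ∀ a ∈ s, a.1 ∈ S)
    (Hσn : ∀ z, (∃ a ∈ s, z ∈ a.2) → ¬(∃ d₀, h z = iotaC d₀) → σ z = z)
    (Hw : (σ w = hd ∧ (∃ d₀ : D, h w = iotaC d₀)) ∨ (∀ a ∈ s, w ∉ a.2))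
    (Hcov : ∀ a ∈ s, a ∈ r0 ∨ ∃ g ∈ gl, a ∈ g.1)
    (H5 : ∀ a ∈ r0, a ∈ s ∧ ∀ z ∈ a.2, ∃ d₀, h z = iotaC d₀)
    (G1 : ∀ g ∈ gl, g.2.1.1 = g.1.map (mapAtom σ))
    (Gs : ∀ g ∈ gl, ∀ a ∈ g.1, a ∈ s)
    (G2 : ∀ g ∈ gl, ∀ a ∈ g.1, ∀ z ∈ a.2, (∃ d₀, h z = iotaC d₀) →
        σ z = g.2.1.2 ∧ g.2.1.2 = g.2.2)
    (Hdisj : ∀ z, ¬(∃ d₀, h z = iotaC d₀) → ∀ g ∈ gl, ∀ g' ∈ gl,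
        (∃ a ∈ g.1, z ∈ a.2) → (∃ a' ∈ g'.1, z ∈ a'.2) → g = g') :
    soundRule S q sg ((encA S (s, w), [hd]),
      r0.map (mapAtom σ) ++ gl.map (fun g => (encA S g.2.1, [g.2.2]))) := by
  intro D₀ I₀ hover₀ hv hbody
  refine Or.inl (Or.inr ⟨(s, w), hv hd, by simp [mapAtom], ?_⟩)
  intro E'' e'' hinj J'' hoverJ hsubJ hsigJ
  -- premise matches for each group
  have hgm : ∀ g ∈ gl, ∃ m : ℕ → E'',
      (∀ a ∈ g.2.1.1, mapAtom m a ∈ J'') ∧ m g.2.1.2 = e'' (hv g.2.2) := by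
    intro g hg
    have hmem : ((encA S g.2.1, [g.2.2]) : Atom ℕ) ∈
        r0.map (mapAtom σ) ++ gl.map (fun g => (encA S g.2.1, [g.2.2])) :=
      List.mem_append_right _ (List.mem_map_of_mem hg)
    have hfact : ((encA S g.2.1, [hv g.2.2]) : Atom D₀) ∈ CI S q sg I₀ := by
      simpa [mapAtom] using hbody _ hmem
    exact CI_extract_A S q sg hover₀ hfact E'' e'' hinj J'' hoverJ hsubJ hsigJ
  set mg : (BCQ × (BCQ × ℕ) × ℕ) → (ℕ → E'') := fun g =>
    if H : ∃ m : ℕ → E'', (∀ a ∈ g.2.1.1, mapAtom m a ∈ J'') ∧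
        m g.2.1.2 = e'' (hv g.2.2) then Classical.choose H
    else (fun _ => e'' (hv hd)) with hmgdef
  have hmgspec : ∀ g ∈ gl, (∀ a ∈ g.2.1.1, mapAtom (mg g) a ∈ J'') ∧
      mg g g.2.1.2 = e'' (hv g.2.2) := by
    intro g hg
    simp only [hmgdef]
    rw [dif_pos (hgm g hg)]
    exact Classical.choose_spec (hgm g hg)
  -- the glued assignment
  set m : ℕ → E'' := fun z =>
    if z = w ∧ ¬ (σ w = hd ∧ (∃ d₀ : D, h w = iotaC d₀)) then e'' (hv hd)
    else if hb : ∃ d₀, h z = iotaC d₀ then e'' (hv (σ z))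
    else if hg : ∃ g, g ∈ gl ∧ ∃ a ∈ g.1, z ∈ a.2 then mg (Classical.choose hg) z
    else e'' (hv hd) with hmdef
  have hmne : ∀ z, (∃ a ∈ s, z ∈ a.2) → m z =
      (if hb : ∃ d₀, h z = iotaC d₀ then e'' (hv (σ z))
      else if hg : ∃ g, g ∈ gl ∧ ∃ a ∈ g.1, z ∈ a.2 then mg (Classical.choose hg) z
      else e'' (hv hd)) := by
    intro z hz
    rcases Hw with HwL | HwR
    · simp only [hmdef]
      rw [if_neg (by tauto)]
    · have hzw : ¬ (z = w ∧ ¬ (σ w = hd ∧ (∃ d₀ : D, h w = iotaC d₀))) := by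
        rintro ⟨rfl, -⟩
        obtain ⟨a, ha, hza⟩ := hz
        exact HwR a ha hza
      simp only [hmdef]
      rw [if_neg hzw]
  refine ⟨m, ?_, ?_⟩
  · intro a ha
    rcases Hcov a ha with har0 | ⟨g, hg, hag⟩
    · -- base atom
      have heq : mapAtom m a = mapAtom (fun z => e'' (hv z)) (mapAtom σ a) := by
        rw [mapAtom_comp]
        apply mapAtom_congr
        intro z hz
        rw [hmne z ⟨a, ha, hz⟩]
        simp only [Function.comp]
        rw [dif_pos ((H5 a har0).2 z hz)]
      rw [heq]
      have hCIa : mapAtom hv (mapAtom σ a) ∈ CI S q sg I₀ :=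
        hbody _ (List.mem_append_left _ (List.mem_map_of_mem har0))
      have hI₀ : mapAtom hv (mapAtom σ a) ∈ I₀ :=
        CI_extract_edb S q sg hCIa (by
          show (mapAtom hv (mapAtom σ a)).1 ∈ S
          simp only [mapAtom]
          exact HS a (H5 a har0).1)
      have := hsubJ ⟨_, hI₀, rfl⟩
      have hcomp : mapAtom e'' (mapAtom hv (mapAtom σ a))
          = mapAtom (fun z => e'' (hv z)) (mapAtom σ a) := by
        rw [mapAtom_comp]; rfl
      rwa [hcomp] at this
    · -- group atom
      have heq : mapAtom m a = mapAtom (mg g) (mapAtom σ a) := by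
        rw [mapAtom_comp]
        apply mapAtom_congr
        intro z hz
        rw [hmne z ⟨a, ha, hz⟩]
        simp only [Function.comp]
        by_cases hb : ∃ d₀, h z = iotaC d₀
        · rw [dif_pos hb]
          obtain ⟨h1, h2⟩ := G2 g hg a hag z hz hb
          rw [h1, (hmgspec g hg).2, h2]
        · rw [dif_neg hb]
          have hex : ∃ g', g' ∈ gl ∧ ∃ a' ∈ g'.1, z ∈ a'.2 := ⟨g, hg, a, hag, hz⟩
          rw [dif_pos hex]
          obtain ⟨hg', a', ha', hz'⟩ := Classical.choose_spec hex
          have : Classical.choose hex = g :=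
            Hdisj z hb _ hg' g hg ⟨a', ha', hz'⟩ ⟨a, hag, hz⟩
          rw [this, Hσn z ⟨a, ha, hz⟩ hb]
      rw [heq]
      exact (hmgspec g hg).1 _ (by rw [G1 g hg]; exact List.mem_map_of_mem hag)
  · by_cases HwL : σ w = hd ∧ (∃ d₀ : D, h w = iotaC d₀)
    · simp only [hmdef]
      rw [if_neg (by tauto), dif_pos HwL.2, HwL.1]
    · simp only [hmdef]
      rw [if_pos ⟨by trivial, HwL⟩]

/-- Candidacy of F1 rules. -/
lemma f1_cand {s : BCQ} {w : ℕ} (σ : ℕ → ℕ) (r0 : BCQ)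
    (gl : List (BCQ × (BCQ × ℕ) × ℕ)) (hd : ℕ)
    (hsw : (s, w) ∈ Pool1 S q sg) (hhd : hd ∈ VJ q sg)
    (hr0 : ∀ a ∈ r0.map (mapAtom σ), a ∈ PoolAtom S q sg)
    (hr0len : r0.length ≤ maxlen q sg) (hgllen : gl.length ≤ maxlen q sg)
    (hgl : ∀ g ∈ gl, g.2.1 ∈ Pool1 S q sg ∧ g.2.2 ∈ VJ q sg) :
    (((encA S (s, w), [hd]),
      r0.map (mapAtom σ) ++ gl.map (fun g => (encA S g.2.1, [g.2.2]))) : DatalogRule)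
      ∈ CandS S q sg := by
  refine ⟨Or.inr ⟨(s, w), hsw, hd, hhd, rfl⟩, ?_, ?_⟩
  · simp only [List.length_append, List.length_map, NB]
    omega
  · intro a ha
    rcases List.mem_append.mp ha with ha | ha
    · exact Or.inl (hr0 a ha)
    · obtain ⟨g, hg, rfl⟩ := List.mem_map.mp ha
      exact Or.inr ⟨g.2.1, (hgl g hg).1, g.2.2, (hgl g hg).2, rfl⟩

lemma zG_high : ∀ x ∈ V q sg, x < zG q sg := by
  intro x hx
  simp only [V, Finset.mem_union, List.mem_toFinset, Finset.mem_singleton] at hx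
  rcases hx with hx | rfl
  · have := mem_le_foldr_max _ _ hx
    simp only [zG, varBound]; omega
  · simp only [zG, zst]; omega

lemma zG_not_mem_V : zG q sg ∉ V q sg := fun h => by
  have := zG_high q sg _ h; omega

lemma palV_not_mem_V {j : ℕ} : palV q sg j ∉ V q sg := fun h => by
  have := zG_high q sg _ h; simp only [palV, zG] at *; omega

lemma palV_ne_zG {j : ℕ} : palV q sg j ≠ zG q sg := by
  simp only [palV, zG]; omega

lemma mapAtom_inj {α β : Type} {f : α → β} (hf : Function.Injective f) :
    Function.Injective (mapAtom f) := by
  rintro ⟨r, l⟩ ⟨r', l'⟩ he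
  simp only [mapAtom, Prod.mk.injEq] at he
  exact Prod.ext he.1 (List.map_injective_iff.mpr hf he.2)

/-- Main completeness lemma: pool judgments matched in the chase are derived
in every instance closed under the program. -/
lemma main_lemma (hsg : ∀ τ ∈ sg, tgdOver S τ ∧ frontierOne τ)
    {D : Type} (I : Inst D) (K : Inst D) (hIK : I ⊆ K)
    (hK : ∀ ru ∈ Prog S q sg, ruleHolds ru K) :
    ∀ k (p : BCQ × ℕ), p ∈ Pool1 S q sg → ∀ d : D,
      matchedC sg I k p.1 p.2 (iotaC d) → (encA S p, [d]) ∈ K := by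
  intro k
  induction k using Nat.strong_induction_on with
  | _ k IH =>
  rintro ⟨s, w⟩ hp d ⟨h, hmatch, hpin⟩
  obtain ⟨hsPool, hwVJ⟩ := hp
  obtain ⟨hslen, hsAt⟩ := hsPool
  -- F2: derivability of downward-match judgments
  have hdownS : ∀ t u, ((t, u) : BCQ × ℕ) ∈ Pool1 S q sg → ∀ ro : Option D,
      downC sg I k ro t u → ∀ d'' : D,
      (ro = some d'' ∨ ro = none) → (encA S (t, u), [d'']) ∈ K := by
    intro t u htu ro hdn d'' hro
    by_cases ht : t = []
    · subst ht
      have happ := hK _ (emptyRule_mem S q sg htu.2) (fun _ => d'')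
        (by simp [emptyRule])
      simpa [mapAtom, emptyRule] using happ
    · obtain ⟨h₁, hpin₁, hres₁, hat₁⟩ := hdn
      obtain ⟨a₀, ha₀⟩ := List.exists_mem_of_ne_nil t ht
      obtain ⟨i₀, c₀, -, ⟨k₀, hk₀, -⟩, -⟩ := hat₁ a₀ ha₀
      have hfinΓ : {p : BCQ × ℕ | p ∈ Pool1 S q sg ∧
          matchedC sg I (k-1) p.1 p.2 (rootE ro)}.Finite :=
        (pool1_finite S q sg).subset (fun p hp => hp.1)
      have hcov : ∀ p ∈ Pool1 S q sg, matchedC sg I (k-1) p.1 p.2 (rootE ro) →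
          p ∈ hfinΓ.toFinset :=
        fun p hp hm => hfinΓ.mem_toFinset.mpr ⟨hp, hm⟩
      have hΓsub : ∀ γ ∈ hfinΓ.toFinset, γ ∈ Pool1 S q sg :=
        fun γ hγ => (hfinΓ.mem_toFinset.mp hγ).1
      have hrule : f2Rule S q sg t u hfinΓ.toFinset ∈ Prog S q sg := by
        rw [mem_Prog]
        exact ⟨f2_cand S q sg htu hfinΓ.toFinset hΓsub,
          f2_sound S q sg hsg I k ro t u hfinΓ.toFinset hcov
            ⟨h₁, hpin₁, hres₁, hat₁⟩⟩
      have hbody : ∀ a ∈ (f2Rule S q sg t u hfinΓ.toFinset).2,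
          mapAtom (fun _ => d'') a ∈ K := by
        intro a ha
        simp only [f2Rule, List.mem_map] at ha
        obtain ⟨γ, hγl, rfl⟩ := ha
        have hγ := hfinΓ.mem_toFinset.mp (Finset.mem_toList.mp hγl)
        have hfact : (encA S γ, [d'']) ∈ K := by
          rcases hro with rfl | rfl
          · exact IH (k-1) (by omega) γ hγ.1 d'' hγ.2
          · have hγpin : ∀ a' ∈ γ.1, γ.2 ∉ a'.2 := by
              intro a' ha' hzin
              obtain ⟨h₂, hm₂, hp₂⟩ := hγ.2
              exact no_junk_elem sg (hm₂ a' ha')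
                (List.mem_map_of_mem (f := h₂) hzin) hp₂
            exact IH (k-1) (by omega) γ hγ.1 d''
              (matchedC_repin sg hγ.2 hγpin (iotaC d''))
        simpa [mapAtom] using hfact
      have := hK _ hrule (fun _ => d'') hbody
      simpa [mapAtom, f2Rule] using this
  -- ===== the decomposition data =====
  -- base values
  have hbw : ∃ d₀ : D, h w = iotaC d₀ := ⟨d, hpin⟩
  -- variables mapped to non-base elements have nonempty address
  have hvar_elem : ∀ z, (∃ a ∈ s, z ∈ a.2) → ¬ (∃ d₀ : D, h z = iotaC d₀) →
      (h z).2 ≠ [] := by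
    rintro z ⟨a, ha, hz⟩ hnb hnil
    have hel : h z ∈ (mapAtom h a).2 := List.mem_map_of_mem (f := h) hz
    rcases elem_struct sg I k _ (hmatch a ha) _ hel with ⟨d₀, he⟩ | ⟨p', i, y, hxe, -⟩
    · exact hnb ⟨d₀, he⟩
    · have := congrArg Prod.snd hxe
      rw [hnil] at this
      simp at this
  have hvar_nojunk : ∀ z, (∃ a ∈ s, z ∈ a.2) → h z ≠ ((none, []) : Om D) := by
    rintro z ⟨a, ha, hz⟩
    exact no_junk_elem sg (hmatch a ha) (List.mem_map_of_mem (f := h) hz)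
  -- tree atoms, their chosen root bag
  set treeA : Atom ℕ → Prop := fun a => ¬ (mapAtom h a ∈ chaseC sg I 0) with htreeA
  set RootP : Atom ℕ → Option D → Prop := fun a ro => ∃ i c, (c : Om D).1 = ro ∧
    bagIn sg I k c i ∧ mapAtom h a ∈ bagFacts sg c i with hRootP
  have hrootex : ∀ a ∈ s, treeA a → ∃ ro, RootP a ro := by
    intro a ha hta
    rcases origin sg I k _ (hmatch a ha) with h0 | ⟨i, c, hk', hbag⟩
    · exact absurd h0 hta
    · exact ⟨c.1, i, c, rfl, hk', hbag⟩
  set rootSel : Atom ℕ → Option D := fun a =>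
    if H : ∃ ro, RootP a ro then Classical.choose H else none with hrootSeldef
  have hrootSel : ∀ a ∈ s, treeA a → RootP a (rootSel a) := by
    intro a ha hta
    simp only [hrootSeldef]
    rw [dif_pos (hrootex a ha hta)]
    exact Classical.choose_spec (hrootex a ha hta)
  -- all variables of a tree atom live in its root's region
  have hgroupvar : ∀ a ∈ s, treeA a → ∀ z ∈ a.2, (h z).1 = rootSel a := by
    intro a ha hta z hz
    obtain ⟨i, c, hc1, -, hbag⟩ := hrootSel a ha hta
    have hel : h z ∈ (mapAtom h a).2 := List.mem_map_of_mem (f := h) hz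
    rcases bag_elems sg hbag hel with he | ⟨s', he⟩
    · rw [he]; exact hc1
    · rw [he]; exact hc1
  -- representatives of root classes
  set rep : Option D → ℕ := fun ro =>
    if h w = rootE ro ∧ w ∈ V q sg then w
    else if H : ∃ z, (∃ a ∈ s, z ∈ a.2) ∧ h z = rootE ro then Classical.choose H
    else zG q sg with hrepdef
  have hrep_val : ∀ ro, rep ro ≠ zG q sg → h (rep ro) = rootE ro := by
    intro ro hne
    simp only [hrepdef] at hne ⊢
    by_cases h1 : h w = rootE ro ∧ w ∈ V q sg
    · rw [if_pos h1]; exact h1.1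
    · rw [if_neg h1] at hne ⊢
      by_cases h2 : ∃ z, (∃ a ∈ s, z ∈ a.2) ∧ h z = rootE ro
      · rw [dif_pos h2]; exact (Classical.choose_spec h2).2
      · rw [dif_neg h2] at hne; exact absurd rfl hne
  have hrep_V : ∀ ro, rep ro ≠ zG q sg → rep ro ∈ V q sg := by
    intro ro hne
    simp only [hrepdef] at hne ⊢
    by_cases h1 : h w = rootE ro ∧ w ∈ V q sg
    · rw [if_pos h1]; exact h1.2
    · rw [if_neg h1] at hne ⊢
      by_cases h2 : ∃ z, (∃ a ∈ s, z ∈ a.2) ∧ h z = rootE ro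
      · rw [dif_pos h2]
        obtain ⟨⟨a, ha, hz⟩, -⟩ := Classical.choose_spec h2
        have haP := hsAt a ha
        exact haP.2.2 _ hz
      · rw [dif_neg h2] at hne; exact absurd rfl hne
  have hrep_ne : ∀ ro, (∃ z, (∃ a ∈ s, z ∈ a.2) ∧ h z = rootE ro) →
      rep ro ≠ zG q sg := by
    intro ro hex
    simp only [hrepdef]
    by_cases h1 : h w = rootE ro ∧ w ∈ V q sg
    · rw [if_pos h1]
      exact fun he => zG_not_mem_V q sg (he ▸ h1.2)
    · rw [if_neg h1, dif_pos hex]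
      obtain ⟨⟨a, ha, hz⟩, -⟩ := Classical.choose_spec hex
      exact fun he => zG_not_mem_V q sg (he ▸ ((hsAt a ha).2.2 _ hz))
  -- the unifier
  set σv : ℕ → ℕ := fun z =>
    if hb : ∃ d₀ : D, h z = iotaC d₀ then rep (some (Classical.choose hb)) else z
    with hσvdef
  have hσ_spec : ∀ z (d₀ : D), h z = iotaC d₀ → σv z = rep (some d₀) := by
    intro z d₀ hz
    have hb : ∃ d₀ : D, h z = iotaC d₀ := ⟨d₀, hz⟩
    simp only [hσvdef]
    rw [dif_pos hb]
    have : Classical.choose hb = d₀ := iotaC_inj ((Classical.choose_spec hb).symm.trans hz)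
    rw [this]
  have hσ_nb : ∀ z, ¬ (∃ d₀ : D, h z = iotaC d₀) → σv z = z := by
    intro z hnb
    simp only [hσvdef]
    rw [dif_neg hnb]
  have hσ_V : ∀ z, (∃ a ∈ s, z ∈ a.2) → σv z ∈ V q sg := by
    intro z hz
    by_cases hb : ∃ d₀ : D, h z = iotaC d₀
    · obtain ⟨d₀, hd₀⟩ := hb
      rw [hσ_spec z d₀ hd₀]
      apply hrep_V
      apply hrep_ne
      exact ⟨z, hz, hd₀⟩
    · rw [hσ_nb z hb]
      obtain ⟨a, ha, hza⟩ := hz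
      exact (hsAt a ha).2.2 _ hza
  have hσ_val : ∀ z, (∃ a ∈ s, z ∈ a.2) → (∃ d₀ : D, h z = iotaC d₀) →
      h (σv z) = h z := by
    rintro z hz ⟨d₀, hd₀⟩
    rw [hσ_spec z d₀ hd₀, hrep_val _ (hrep_ne _ ⟨z, hz, hd₀⟩), hd₀]; rfl
  -- groups
  set grpAt : Option D → BCQ := fun ro =>
    s.filter (fun a => decide (treeA a ∧ rootSel a = ro)) with hgrpdef
  have hgrp_mem : ∀ ro a, a ∈ grpAt ro ↔ (a ∈ s ∧ treeA a ∧ rootSel a = ro) := by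
    intro ro a
    simp only [hgrpdef, List.mem_filter, decide_eq_true_eq]
  set rootsL : List (Option D) :=
    ((s.filter (fun a => decide (treeA a))).map rootSel).dedup with hrootsdef
  have hroots_mem : ∀ a ∈ s, treeA a → rootSel a ∈ rootsL := by
    intro a ha hta
    simp only [hrootsdef, List.mem_dedup]
    exact List.mem_map_of_mem (List.mem_filter.mpr ⟨ha, decide_eq_true hta⟩)
  have hroots_nodup : rootsL.Nodup := List.nodup_dedup _
  have hroots_len : rootsL.length ≤ maxlen q sg := by
    have h1 : rootsL.length ≤
        ((s.filter (fun a => decide (treeA a))).map rootSel).length :=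
      List.Sublist.length_le (List.dedup_sublist _)
    rw [List.length_map] at h1
    exact le_trans (le_trans h1 (List.length_filter_le _ _)) hslen
  set roAt : ℕ → Option D := fun j => rootsL.getD j none with hroAtdef
  set argv : ℕ → ℕ := fun j =>
    if rep (roAt j) = zG q sg then palV q sg j else rep (roAt j) with hargvdef
  set Gj : ℕ → (BCQ × (BCQ × ℕ) × ℕ) := fun j =>
    (grpAt (roAt j), ((grpAt (roAt j)).map (mapAtom σv), rep (roAt j)), argv j)
    with hGjdef
  set gl : List (BCQ × (BCQ × ℕ) × ℕ) := (List.range rootsL.length).map Gj with hgldef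
  set r0 : BCQ := s.filter (fun a => decide (¬ treeA a)) with hr0def
  set hdv : ℕ := if ∃ a ∈ s, w ∈ a.2 then w else zG q sg with hhdvdef
  have hGj_mem : ∀ j < rootsL.length, Gj j ∈ gl := fun j hj =>
    List.mem_map_of_mem (f := Gj) (List.mem_range.mpr hj)
  have hgl_elim : ∀ g ∈ gl, ∃ j < rootsL.length, g = Gj j := by
    intro g hg
    simp only [hgldef, List.mem_map, List.mem_range] at hg
    obtain ⟨j, hj, rfl⟩ := hg
    exact ⟨j, hj, rfl⟩
  have hroAt_inj : ∀ j < rootsL.length, ∀ j' < rootsL.length,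
      roAt j = roAt j' → j = j' := by
    intro j hj j' hj' he
    simp only [hroAtdef] at he
    rw [List.getD_eq_getElem _ _ hj, List.getD_eq_getElem _ _ hj'] at he
    exact (List.Nodup.getElem_inj_iff hroots_nodup).mp he
  have hgrp_var_ro : ∀ j, ∀ a ∈ grpAt (roAt j), ∀ z ∈ a.2, (h z).1 = roAt j := by
    intro j a haj z hz
    obtain ⟨ha, hta, hsel⟩ := (hgrp_mem _ a).mp haj
    rw [← hsel]
    exact hgroupvar a ha hta z hz
  have hgrp_sub : ∀ ro, ∀ a ∈ grpAt ro, a ∈ s := fun ro a haj =>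
    ((hgrp_mem ro a).mp haj).1
  -- more facts about representatives
  have hrep_none : rep none = zG q sg := by
    by_contra hne
    have := hrep_val none hne
    simp only [hrepdef] at this hne
    by_cases h1 : h w = rootE none ∧ w ∈ V q sg
    · rw [hpin] at h1
      exact absurd (congrArg Prod.fst h1.1) (by simp [iotaC, rootE])
    · rw [if_neg h1] at hne
      by_cases h2 : ∃ z, (∃ a ∈ s, z ∈ a.2) ∧ h z = rootE none
      · obtain ⟨z, hz, hze⟩ := h2
        exact hvar_nojunk z hz hze
      · rw [dif_neg h2] at hne
        exact hne rfl
  have hrep_some : ∀ ro, rep ro ≠ zG q sg → ∃ d'' : D, ro = some d'' := by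
    intro ro hne
    cases ro with
    | none => exact absurd hrep_none hne
    | some d'' => exact ⟨d'', rfl⟩
  -- the F1 rule
  set rule : DatalogRule := ((encA S (s, w), [hdv]),
    r0.map (mapAtom σv) ++ gl.map (fun g => (encA S g.2.1, [g.2.2]))) with hruledef
  have hr0s : ∀ a ∈ r0, a ∈ s ∧ ¬ treeA a := by
    intro a ha
    simp only [hr0def, List.mem_filter, decide_eq_true_eq] at ha
    exact ha
  have hr0bval : ∀ a ∈ r0, ∀ z ∈ a.2, ∃ d₀ : D, h z = iotaC d₀ := by
    intro a ha z hz
    obtain ⟨has, hnt⟩ := hr0s a ha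
    have h0 : mapAtom h a ∈ chaseC sg I 0 := by
      by_contra hcon
      exact hnt hcon
    obtain ⟨β, hβ, heβ⟩ := h0
    have : h z ∈ (mapAtom h a).2 := List.mem_map_of_mem (f := h) hz
    rw [← heβ] at this
    obtain ⟨d₀, -, hd₀⟩ := List.mem_map.mp this
    exact ⟨d₀, hd₀.symm⟩
  have hσim_pool : ∀ (l : BCQ), (∀ a ∈ l, a ∈ s) → l.length ≤ maxlen q sg →
      ∀ a' ∈ l.map (mapAtom σv), a' ∈ PoolAtom S q sg := by
    intro l hl hlen a' ha'
    obtain ⟨a, hal, rfl⟩ := List.mem_map.mp ha'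
    obtain ⟨hS, ⟨b, hb, hb1, hb2⟩, -⟩ := hsAt a (hl a hal)
    refine ⟨hS, ⟨b, hb, hb1, by simpa [mapAtom] using hb2⟩, ?_⟩
    intro x hx
    obtain ⟨z, hz, rfl⟩ := List.mem_map.mp hx
    exact hσ_V z ⟨a, hl a hal, hz⟩
  have hVsubVJ : ∀ x ∈ V q sg, x ∈ VJ q sg := by
    intro x hx
    simp only [VJ, Finset.mem_union]
    exact Or.inl (Or.inl hx)
  have hgrp_len : ∀ ro, (grpAt ro).length ≤ maxlen q sg := fun ro =>
    le_trans (List.length_filter_le _ _) hslen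
  have hgl_pool : ∀ g ∈ gl, g.2.1 ∈ Pool1 S q sg ∧ g.2.2 ∈ VJ q sg := by
    intro g hg
    obtain ⟨j, hj, rfl⟩ := hgl_elim g hg
    constructor
    · refine ⟨⟨by simpa [hGjdef] using hgrp_len (roAt j), ?_⟩, ?_⟩
      · exact hσim_pool _ (hgrp_sub (roAt j)) (hgrp_len (roAt j))
      · by_cases hz : rep (roAt j) = zG q sg
        · rw [hGjdef]; simpa [hz] using zG_mem_VJ q sg
        · exact hVsubVJ _ (hrep_V _ hz)
    · by_cases hz : rep (roAt j) = zG q sg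
      · simp only [hGjdef, hargvdef]
        rw [if_pos hz]
        exact palV_mem_VJ q sg (lt_of_lt_of_le hj hroots_len)
      · simp only [hGjdef, hargvdef]
        rw [if_neg hz]
        exact hVsubVJ _ (hrep_V _ hz)
  have hrule_mem : rule ∈ Prog S q sg := by
    rw [mem_Prog]
    constructor
    · refine f1_cand S q sg σv r0 gl hdv ⟨⟨hslen, hsAt⟩, hwVJ⟩ ?_ ?_ ?_ ?_ hgl_pool
      · by_cases hwv : ∃ a ∈ s, w ∈ a.2
        · simp only [hhdvdef]; rw [if_pos hwv]; exact hwVJ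
        · simp only [hhdvdef]; rw [if_neg hwv]; exact zG_mem_VJ q sg
      · exact hσim_pool r0 (fun a ha => (hr0s a ha).1)
          (le_trans (List.length_filter_le _ _) hslen)
      · exact le_trans (List.length_filter_le _ _) hslen
      · simp only [hgldef, List.length_map, List.length_range]
        exact hroots_len
    · apply f1_sound S q sg s w σv r0 gl hdv h
      · exact fun a ha => (hsAt a ha).1
      · exact fun z _ => hσ_nb z
      · by_cases hwv : ∃ a ∈ s, w ∈ a.2
        · refine Or.inl ⟨?_, hbw⟩
          have hwV : w ∈ V q sg := by
            obtain ⟨a, ha, hza⟩ := hwv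
            exact (hsAt a ha).2.2 _ hza
          rw [hσ_spec w d hpin]
          simp only [hhdvdef]
          rw [if_pos hwv]
          simp only [hrepdef]
          rw [if_pos ⟨hpin, hwV⟩]
        · exact Or.inr (fun a ha hza => hwv ⟨a, ha, hza⟩)
      · intro a ha
        by_cases hta : treeA a
        · right
          obtain ⟨j, hj, hget⟩ := List.mem_iff_getElem.mp (hroots_mem a ha hta)
          have hro : roAt j = rootSel a := by
            simp only [hroAtdef]
            rw [List.getD_eq_getElem _ _ hj, hget]
          exact ⟨Gj j, hGj_mem j hj, (hgrp_mem _ a).mpr ⟨ha, hta, hro.symm ▸ rfl⟩⟩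
        · left
          simp only [hr0def, List.mem_filter, decide_eq_true_eq]
          exact ⟨ha, hta⟩
      · exact fun a ha => ⟨(hr0s a ha).1, hr0bval a ha⟩
      · intro g hg
        obtain ⟨j, hj, rfl⟩ := hgl_elim g hg
        rfl
      · intro g hg
        obtain ⟨j, hj, rfl⟩ := hgl_elim g hg
        exact hgrp_sub (roAt j)
      · intro g hg a hag z hz hb
        obtain ⟨j, hj, rfl⟩ := hgl_elim g hg
        obtain ⟨d₀, hd₀⟩ := hb
        have h1 : (h z).1 = roAt j := hgrp_var_ro j a hag z hz
        have hro : roAt j = some d₀ := by rw [← h1, hd₀]; rfl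
        have hz1 : σv z = rep (roAt j) := by rw [hσ_spec z d₀ hd₀, hro]
        have hzne : rep (roAt j) ≠ zG q sg := by
          apply hrep_ne
          refine ⟨z, ⟨a, hgrp_sub _ a hag, hz⟩, ?_⟩
          rw [hd₀, hro]; rfl
        refine ⟨hz1, ?_⟩
        simp only [hGjdef, hargvdef]
        rw [if_neg hzne]
      · intro z hb g hg g' hg' ⟨a, hag, hza⟩ ⟨a', hag', hza'⟩
        obtain ⟨j, hj, rfl⟩ := hgl_elim g hg
        obtain ⟨j', hj', rfl⟩ := hgl_elim g' hg'
        have h1 : (h z).1 = roAt j := hgrp_var_ro j a hag z hza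
        have h2 : (h z).1 = roAt j' := hgrp_var_ro j' a' hag' z hza'
        rw [hroAt_inj j hj j' hj' (h1 ▸ h2)]
  -- the assignment for evaluating the rule in K
  set hvK : ℕ → D := fun z =>
    if z = zG q sg then d
    else if hpal : ∃ jd : ℕ × D, jd.1 < rootsL.length ∧ z = palV q sg jd.1 ∧
        roAt jd.1 = some jd.2 then (Classical.choose hpal).2
    else if hb : ∃ d₀ : D, h z = iotaC d₀ then Classical.choose hb
    else d
    with hvKdef
  have hvK_V : ∀ z ∈ V q sg, ∀ d₀ : D, h z = iotaC d₀ → hvK z = d₀ := by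
    intro z hzV d₀ hd₀
    have h1 : z ≠ zG q sg := fun he => zG_not_mem_V q sg (he ▸ hzV)
    have h2 : ¬ ∃ jd : ℕ × D, jd.1 < rootsL.length ∧ z = palV q sg jd.1 ∧
        roAt jd.1 = some jd.2 := by
      rintro ⟨jd, -, rfl, -⟩
      exact palV_not_mem_V q sg hzV
    have hb : ∃ d₀ : D, h z = iotaC d₀ := ⟨d₀, hd₀⟩
    simp only [hvKdef]
    rw [if_neg h1, dif_neg h2, dif_pos hb]
    exact iotaC_inj ((Classical.choose_spec hb).symm.trans hd₀)
  -- downward matches for the groups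
  have hgrp_down : ∀ j < rootsL.length,
      downC sg I k (roAt j) ((grpAt (roAt j)).map (mapAtom σv)) (rep (roAt j)) := by
    intro j hj
    set hg : ℕ → Om D := fun z =>
      if z = rep (roAt j) then rootE (roAt j) else h z with hgdef
    have hg_nb : ∀ a ∈ grpAt (roAt j), ∀ z' ∈ a.2,
        ¬ (∃ d₀ : D, h z' = iotaC d₀) → z' ≠ rep (roAt j) := by
      intro a hag z' hz' hb he
      have has := hgrp_sub _ a hag
      by_cases hzg : rep (roAt j) = zG q sg
      · exact zG_not_mem_V q sg ((he.trans hzg) ▸ ((hsAt a has).2.2 _ hz'))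
      · have hrv := hrep_val _ hzg
        rw [← he] at hrv
        rcases hrep_some _ hzg with ⟨d'', hro''⟩
        rw [hro''] at hrv
        exact hb ⟨d'', hrv⟩
    refine ⟨hg, by simp [hgdef], ?_, ?_⟩
    · rintro z ⟨a', ha', hz⟩ hzne
      obtain ⟨a, hag, rfl⟩ := List.mem_map.mp ha'
      obtain ⟨z', hz', rfl⟩ := List.mem_map.mp hz
      have hzs : ∃ a₀ ∈ s, z' ∈ a₀.2 := ⟨a, hgrp_sub _ a hag, hz'⟩
      by_cases hb : ∃ d₀ : D, h z' = iotaC d₀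
      · obtain ⟨d₀, hd₀⟩ := hb
        have h1 : (h z').1 = roAt j := hgrp_var_ro j a hag z' hz'
        have hro2 : roAt j = some d₀ := by rw [← h1, hd₀]; rfl
        rw [hσ_spec z' d₀ hd₀, ← hro2] at hzne
        exact absurd rfl hzne
      · rw [hσ_nb z' hb] at hzne ⊢
        simp only [hgdef]
        rw [if_neg hzne]
        exact ⟨hgrp_var_ro j a hag z' hz', hvar_elem z' hzs hb⟩
    · rintro a' ha'
      obtain ⟨a, hag, rfl⟩ := List.mem_map.mp ha'
      obtain ⟨has, hta, hsel⟩ := (hgrp_mem _ a).mp hag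
      have hRP := hrootSel a has hta
      rw [hsel] at hRP
      obtain ⟨i, c, hc1, hbagIn, hbag⟩ := hRP
      refine ⟨i, c, hc1, hbagIn, ?_⟩
      have heq : mapAtom hg (mapAtom σv a) = mapAtom h a := by
        rw [mapAtom_comp]
        apply mapAtom_congr
        intro z' hz'
        simp only [Function.comp, hgdef]
        by_cases hb : ∃ d₀ : D, h z' = iotaC d₀
        · obtain ⟨d₀, hd₀⟩ := hb
          have h1 : (h z').1 = roAt j := hgrp_var_ro j a hag z' hz'
          have hro2 : roAt j = some d₀ := by rw [← h1, hd₀]; rfl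
          rw [hσ_spec z' d₀ hd₀, ← hro2, if_pos rfl, hro2, hd₀]
          rfl
        · rw [hσ_nb z' hb, if_neg (hg_nb a hag z' hz' hb)]
      rw [heq]
      exact hbag
  -- body satisfaction in K
  have hbodyK : ∀ a' ∈ rule.2, mapAtom hvK a' ∈ K := by
    intro a' ha'
    rw [hruledef] at ha'
    rcases List.mem_append.mp ha' with hmem | hmem
    · obtain ⟨a, har0, rfl⟩ := List.mem_map.mp hmem
      obtain ⟨has, hnt⟩ := hr0s a har0
      have h0 : mapAtom h a ∈ chaseC sg I 0 := by
        by_contra hcon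
        exact hnt hcon
      obtain ⟨β, hβ, heβ⟩ := h0
      have heq : mapAtom iotaC (mapAtom hvK (mapAtom σv a)) = mapAtom iotaC β := by
        rw [heβ, mapAtom_comp, mapAtom_comp]
        apply mapAtom_congr
        intro z hz
        simp only [Function.comp]
        obtain ⟨d₀, hd₀⟩ := hr0bval a har0 z hz
        have hrepne : rep (some d₀) ≠ zG q sg := hrep_ne _ ⟨z, ⟨a, has, hz⟩, hd₀⟩
        rw [hσ_spec z d₀ hd₀,
          hvK_V _ (hrep_V _ hrepne) d₀ (by rw [hrep_val _ hrepne]; rfl), hd₀]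
      have hβ' : mapAtom hvK (mapAtom σv a) = β := mapAtom_inj iotaC_inj heq
      rw [hβ']
      exact hIK hβ
    · obtain ⟨g, hg, rfl⟩ := List.mem_map.mp hmem
      obtain ⟨j, hj, rfl⟩ := hgl_elim g hg
      have hpool : ((Gj j).2.1) ∈ Pool1 S q sg := (hgl_pool _ (hGj_mem j hj)).1
      have hdnj := hgrp_down j hj
      have hfact : (encA S (Gj j).2.1, [hvK (argv j)]) ∈ K := by
        by_cases hzg : rep (roAt j) = zG q sg
        · have hargv : argv j = palV q sg j := by
            simp only [hargvdef]
            rw [if_pos hzg]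
          cases hro' : roAt j with
          | some d'' =>
            have hpal : ∃ jd : ℕ × D, jd.1 < rootsL.length ∧
                palV q sg j = palV q sg jd.1 ∧ roAt jd.1 = some jd.2 :=
              ⟨(j, d''), hj, rfl, hro'⟩
            have hval : hvK (palV q sg j) = d'' := by
              simp only [hvKdef]
              rw [if_neg (palV_ne_zG q sg), dif_pos hpal]
              obtain ⟨h1', h2', h3'⟩ := Classical.choose_spec hpal
              have hjj : j = (Classical.choose hpal).1 := by
                exact Nat.add_left_cancel h2'
              rw [← hjj, hro'] at h3'
              exact (Option.some_inj.mp h3').symm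
            rw [hargv, hval]
            have hdnj' : downC sg I k (some d'') (Gj j).2.1.1 (Gj j).2.1.2 := by
              rw [← hro']
              exact hdnj
            exact hdownS (Gj j).2.1.1 (Gj j).2.1.2 hpool (some d'') hdnj' d''
              (Or.inl rfl)
          | none =>
            have hdnj' : downC sg I k none (Gj j).2.1.1 (Gj j).2.1.2 := by
              rw [← hro']
              exact hdnj
            exact hdownS (Gj j).2.1.1 (Gj j).2.1.2 hpool none hdnj' _ (Or.inr rfl)
        · have hargv : argv j = rep (roAt j) := by
            simp only [hargvdef]
            rw [if_neg hzg]
          obtain ⟨d'', hro'⟩ := hrep_some _ hzg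
          have hval : hvK (rep (roAt j)) = d'' :=
            hvK_V _ (hrep_V _ hzg) d'' (by rw [hrep_val _ hzg, hro']; rfl)
          rw [hargv, hval]
          exact hdownS (Gj j).2.1.1 (Gj j).2.1.2 hpool (roAt j) hdnj d'' (Or.inl hro')
      simpa [mapAtom] using hfact
  -- conclude via the rule
  have hhead := hK _ hrule_mem hvK hbodyK
  have hdval : hvK hdv = d := by
    by_cases hwv : ∃ a ∈ s, w ∈ a.2
    · simp only [hhdvdef]
      rw [if_pos hwv]
      obtain ⟨a, ha, hza⟩ := hwv
      exact hvK_V w ((hsAt a ha).2.2 _ hza) d hpin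
    · simp only [hhdvdef]
      rw [if_neg hwv]
      simp [hvKdef]
  have hfin : mapAtom hvK rule.1 = (encA S (s, w), [d]) := by
    rw [hruledef]
    simp [mapAtom, hdval]
  rw [← hfin]
  exact hhead



end
end Statement1
/-- For every Boolean conjunctive query `q` and every finite
set `sg` of frontier-one TGDs (over schema `S`), there is a Monadic Datalog
query `R` that is a certain-answer rewriting of `q` w.r.t. `sg`: for every
instance `I`, `R` holds on `I` iff `I ∧ sg ⊨ q`. -/
theorem cq_has_mdl_certain_answer_rewriting_over_frontier_one
    (S : Finset RelSym) (q : BCQ) (hq : bcqOver S q)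
    (sg : List TGD) (hsg : ∀ τ ∈ sg, tgdOver S τ ∧ frontierOne τ) :
    ∃ R : DatalogQuery, isMDL R ∧ dlOver S R ∧ dlBoolean R ∧
      ∀ (D : Type) (I : Inst D), overSchema S I →
        (dlHolds R I ↔ certain S sg (fun _ J => bcqHolds q J) I) := by
  classical
  refine ⟨RQ S q sg, ?_, ?_, ?_, ?_⟩
  · -- Monadic
    intro r hr
    rcases Set.mem_insert_iff.mp ((mem_Prog S q sg).mp hr).1.1 with h | ⟨p, -, u, -, h⟩
    · exact Or.inl ⟨by simp [h, RQ], by simp [h]⟩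
    · exact Or.inr (by simp [h])
  · -- well-formed over the schema
    refine ⟨?_, ?_⟩
    · intro r hr
      obtain ⟨⟨hhead, hbody⟩, -⟩ := (mem_Prog S q sg).mp hr
      constructor
      · rcases Set.mem_insert_iff.mp hhead with h | ⟨p, -, u, -, h⟩
        · rw [show r.1.1 = gSym S from by rw [h]]
          exact gSym_not_mem S
        · rw [show r.1.1 = encA S p from by rw [h]]
          exact encA_not_mem S p
      · intro a ha
        rcases hbody.2 a ha with h | ⟨p, hp, u, hu, h⟩
        · exact Or.inl h.1
        · exact Or.inr ⟨_, tautRule_mem S q sg hp hu, by rw [h]⟩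
    · exact ⟨goalRule S q sg, goalRule_mem S q sg hq, rfl⟩
  · -- Boolean
    intro r hr hgoal
    rcases Set.mem_insert_iff.mp ((mem_Prog S q sg).mp hr).1.1 with h | ⟨p, -, u, -, h⟩
    · rw [show r.1.2 = [] from by rw [h]]
    · exact absurd (by rw [show r.1.1 = encA S p from by rw [h]] at hgoal; exact hgoal)
        (encA_ne_g S p)
  · -- the rewriting property
    intro D I hover
    constructor
    · exact easy_dir S q sg I hover
    · intro hcert
      intro K hKset
      obtain ⟨hIK, hK⟩ := hKset
      by_cases hD : Nonempty D
      · obtain ⟨d₀⟩ := hD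
        have hchase : bcqHolds q (chaseOm sg I) :=
          hcert (Om D) iotaC iotaC_inj (chaseOm sg I)
            (chase_overSchema S sg hsg I hover) (chase_base_subset sg I)
            (chase_model S sg hsg I)
        obtain ⟨h₀, hm₀⟩ := hchase
        obtain ⟨k, hk⟩ := exists_stage sg q h₀ hm₀
        have hq0 : ((q, zG q sg) : BCQ × ℕ) ∈ Pool1 S q sg :=
          ⟨q_mem_poolQ S q sg hq, zG_mem_VJ q sg⟩
        have hm : matchedC sg I k q (zG q sg) (iotaC d₀) :=
          matchedC_repin sg (⟨h₀, hk, rfl⟩ : matchedC sg I k q (zG q sg) (h₀ (zG q sg)))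
            (fun a ha => zG_fresh q sg a (q_atoms_allAtoms q sg ha)) _
        have hfact := main_lemma S q sg hsg I K hIK hK k (q, zG q sg) hq0 d₀ hm
        have happ := hK _ (goalRule_mem S q sg hq) (fun _ => d₀) (by
          intro a ha
          simp only [goalRule, List.mem_singleton] at ha
          rw [ha]
          simpa [mapAtom] using hfact)
        show (gSym S, ([] : List D)) ∈ K
        simpa [mapAtom, goalRule] using happ
      · exfalso
        have he : D → Empty := fun d => absurd ⟨d⟩ hD
        have hmap : overSchema S (mapInst he I) := by
          rintro α ⟨β, hβ, rfl⟩
          exact hover β hβ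
        have hsig : sigmaHolds sg (mapInst he I) := by
          intro τ hτ hh hbody
          exact (hh 0).elim
        have := hcert Empty he (fun a b _ => (he a).elim) (mapInst he I) hmap
          (fun α h => h) hsig
        obtain ⟨hh, -⟩ := this
        exact (hh 0).elim

end MonDetPaper
end

section
/- König-style compactness for UCQ views: assume V is a set of views with UCQ definitions and Q is a Boolean Datalog query. Let J be a countably infinite view-schema instance such that every instance I ∈ BackV_V(J) satisfies Q. Then there is a finite subinstance J⁻ ⊆ J such that every instance I ∈ BackV_V(J⁻) satisfies Q. -/
namespace MonDetPaper

/-! ### Auxiliary material for the compactness proof -/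

lemma subset_dlFix {D : Type} (P : DatalogProgram) (I : Inst D) : I ⊆ dlFix P I := by
  intro a ha
  exact Set.mem_sInter.mpr fun K hK => hK.1 ha

lemma dlFix_mono {D : Type} (P : DatalogProgram) {I I' : Inst D} (h : I ⊆ I') :
    dlFix P I ⊆ dlFix P I' := by
  intro a ha
  exact Set.mem_sInter.mpr fun K hK => Set.mem_sInter.mp ha K ⟨h.trans hK.1, hK.2⟩

lemma dlFix_rules {D : Type} (P : DatalogProgram) (I : Inst D) :
    ∀ r ∈ P, ruleHolds r (dlFix P I) := by
  intro r hr hmap hbody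
  exact Set.mem_sInter.mpr fun K hK =>
    hK.2 r hr hmap (fun a ha => Set.mem_sInter.mp (hbody a ha) K hK)

lemma dlFix_le {D : Type} (P : DatalogProgram) (I W : Inst D) (h1 : I ⊆ W)
    (h2 : ∀ r ∈ P, ruleHolds r W) : dlFix P I ⊆ W :=
  fun _ ha => Set.mem_sInter.mp ha W ⟨h1, h2⟩

lemma dlHolds_mono {D : Type} (Q : DatalogQuery) {I I' : Inst D} (h : I ⊆ I') :
    dlHolds Q I → dlHolds Q I' :=
  fun hq => dlFix_mono Q.1 h hq

/-- Compactness of the Datalog fixpoint: every derived fact is derivable from a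
finite subinstance. -/
lemma dlFix_compact {D : Type} (P : DatalogProgram) (K : Inst D) {t : Atom D}
    (ht : t ∈ dlFix P K) : ∃ K₀, K₀ ⊆ K ∧ K₀.Finite ∧ t ∈ dlFix P K₀ := by
  classical
  set W : Inst D := {u | ∃ K₀, K₀ ⊆ K ∧ K₀.Finite ∧ u ∈ dlFix P K₀} with hW
  have hKW : K ⊆ W := by
    intro u hu
    exact ⟨{u}, by simpa using hu, Set.finite_singleton u, subset_dlFix P _ rfl⟩
  have hWr : ∀ r ∈ P, ruleHolds r W := by
    intro r hr hmap hbody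
    have hbody' : ∀ a : {a // a ∈ r.2},
        ∃ K₀, K₀ ⊆ K ∧ K₀.Finite ∧ mapAtom hmap a.1 ∈ dlFix P K₀ :=
      fun a => hbody a.1 a.2
    choose F hF1 hF2 hF3 using hbody'
    haveI : Finite {a // a ∈ r.2} := (r.2.finite_toSet).to_subtype
    refine ⟨⋃ a : {a // a ∈ r.2}, F a, ?_, ?_, ?_⟩
    · exact Set.iUnion_subset fun a => hF1 a
    · exact Set.finite_iUnion fun a => hF2 a
    · refine dlFix_rules P _ r hr hmap ?_
      intro a ha
      exact dlFix_mono P (Set.subset_iUnion F ⟨a, ha⟩) (hF3 ⟨a, ha⟩)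
  exact dlFix_le P K W hKW hWr ht

/-- Eligibility of a CQ disjunct for a given view fact. -/
def Elig (V : UCQViews) {D : Type} (a : Atom D) (q : CQ) : Prop :=
  ∃ vd ∈ V, vd.1 = a.1 ∧ q ∈ vd.2 ∧ q.2.length = a.2.length

/-- The base instance generated by a choice of disjuncts on a set of view facts. -/
def Kof {D : Type} (c : Atom D → CQ) (J₀ : Set (Atom D)) : Inst (D ⊕ (Atom D × Var)) :=
  { b | ∃ a ∈ J₀, ∃ cc ∈ (c a).1, b = mapAtom (backAssign a (c a)) cc }

lemma Kof_mono {D : Type} (c : Atom D → CQ) {J₀ J₁ : Set (Atom D)} (h : J₀ ⊆ J₁) :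
    Kof c J₀ ⊆ Kof c J₁ := by
  rintro b ⟨a, ha, cc, hcc, rfl⟩
  exact ⟨a, h ha, cc, hcc, rfl⟩

lemma Kof_congr {D : Type} {c c' : Atom D → CQ} {J₀ : Set (Atom D)}
    (h : ∀ a ∈ J₀, c a = c' a) : Kof c J₀ = Kof c' J₀ := by
  ext b
  constructor
  · rintro ⟨a, ha, cc, hcc, rfl⟩
    exact ⟨a, ha, cc, by rw [← h a ha]; exact hcc, by rw [h a ha]⟩
  · rintro ⟨a, ha, cc, hcc, rfl⟩
    exact ⟨a, ha, cc, by rw [h a ha]; exact hcc, by rw [h a ha]⟩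

lemma Kof_mem_backV {D : Type} (V : UCQViews) (c : Atom D → CQ) (J₀ : Set (Atom D))
    (h : ∀ a ∈ J₀, Elig V a (c a)) : Kof c J₀ ∈ backV V J₀ :=
  ⟨c, h, rfl⟩

lemma backV_elim {D : Type} {V : UCQViews} {J₀ : Set (Atom D)} {K : Inst (D ⊕ (Atom D × Var))}
    (hK : K ∈ backV V J₀) :
    ∃ c : Atom D → CQ, (∀ a ∈ J₀, Elig V a (c a)) ∧ K = Kof c J₀ := by
  obtain ⟨c, h1, h2⟩ := hK
  exact ⟨c, h1, h2⟩

/-- A choice on the `n`-th prefix that is everywhere eligible but fails `Q`. -/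
def KFail (V : UCQViews) (Q : DatalogQuery) {D : Type} (pre : ℕ → Set (Atom D))
    (n : ℕ) (c : Atom D → CQ) : Prop :=
  (∀ a ∈ pre n, Elig V a (c a)) ∧ ¬ dlHolds Q (Kof c (pre n))

/-- A choice whose restriction to the `n`-th prefix admits failing extensions to
all larger prefixes. -/
def KGood (V : UCQViews) (Q : DatalogQuery) {D : Type} (pre : ℕ → Set (Atom D))
    (n : ℕ) (c : Atom D → CQ) : Prop :=
  ∀ m, n ≤ m → ∃ c', KFail V Q pre m c' ∧ ∀ a ∈ pre n, c' a = c a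

open Classical in
/-- Update a choice function at one point. -/
noncomputable def upd {D : Type} (c : Atom D → CQ) (en : Atom D) (q : CQ) :
    Atom D → CQ :=
  fun a => if a = en then q else c a

lemma KFail_mono {V : UCQViews} {Q : DatalogQuery} {D : Type} {pre : ℕ → Set (Atom D)}
    (hmono : ∀ {m n : ℕ}, m ≤ n → pre m ⊆ pre n) {m n : ℕ} (hmn : m ≤ n)
    {c : Atom D → CQ} (hf : KFail V Q pre n c) : KFail V Q pre m c := by
  refine ⟨fun a ha => hf.1 a (hmono hmn ha), fun hd => hf.2 ?_⟩
  exact dlHolds_mono Q (Kof_mono c (hmono hmn)) hd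

/-- The König step: a good choice at level `n` can be extended to a good choice
at level `n+1`. -/
lemma KGood_step (V : UCQViews) (Q : DatalogQuery) {D : Type} (pre : ℕ → Set (Atom D))
    (hmono : ∀ {m n : ℕ}, m ≤ n → pre m ⊆ pre n)
    (n : ℕ) (en : Atom D) (hen : en ∉ pre n) (hpre : pre (n + 1) = insert en (pre n))
    (c : Atom D → CQ) (hg : KGood V Q pre n c) :
    ∃ q, KGood V Q pre (n + 1) (upd c en q) := by
  classical
  by_contra hno
  push_neg at hno
  simp only [KGood, not_forall] at hno
  have hno' : ∀ q : CQ, ∃ m, (n + 1 ≤ m) ∧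
      ∀ c', KFail V Q pre m c' → ∃ a ∈ pre (n + 1), c' a ≠ upd c en q a := by
    intro q
    obtain ⟨m, hm, hnc⟩ := hno q
    push_neg at hnc
    exact ⟨m, hm, hnc⟩
  choose mf hmf1 hmf2 using hno'
  set EF : Finset CQ := (V.flatMap Prod.snd).toFinset with hEF
  set M : ℕ := max (EF.sup mf) (n + 1) with hM
  obtain ⟨c', hfail, hagree⟩ := hg M (le_trans (Nat.le_succ n) (le_max_right _ _))
  set q : CQ := c' en with hq
  have henM : en ∈ pre M := hmono (le_max_right _ _) (hpre ▸ Set.mem_insert en (pre n))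
  have helig : Elig V en q := hfail.1 en henM
  have hqEF : q ∈ EF := by
    obtain ⟨vd, hvd, _, hq2, _⟩ := helig
    simp only [hEF, List.mem_toFinset, List.mem_flatMap]
    exact ⟨vd, hvd, hq2⟩
  have hle : mf q ≤ M := le_trans (Finset.le_sup hqEF) (le_max_left _ _)
  have hfail' : KFail V Q pre (mf q) c' := KFail_mono hmono hle hfail
  obtain ⟨a, ha, hne⟩ := hmf2 q c' hfail'
  apply hne
  rw [hpre] at ha
  rcases ha with rfl | ha
  · simp [upd, hq]
  · have hane : a ≠ en := fun he => hen (he ▸ ha)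
    simp only [upd, if_neg hane]
    exact hagree a ha

/-- König-style compactness for UCQ views.
Let `V` be a set of views with UCQ definitions and `Q` a Boolean Datalog
query (over base schema `S`, view symbols in `SV`).  If `J` is a countably
infinite view-schema instance such that every `K ∈ BackV_V(J)` satisfies `Q`,
then there is a finite subinstance `J⁻ ⊆ J` such that every
`K ∈ BackV_V(J⁻)` satisfies `Q`. -/
theorem koenig_compactness_ucq_views
    (S SV : Finset RelSym) (hdisj : Disjoint S SV)
    (V : UCQViews) (hV : ∀ vd ∈ V, vd.1 ∈ SV ∧ ucqOver S vd.2)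
    (Q : DatalogQuery) (hQ : dlOver S Q) (hQb : dlBoolean Q)
    (D : Type) (J : Inst D) (hJc : J.Countable) (hJinf : J.Infinite)
    (hJov : overSchema SV J)
    (h : ∀ K ∈ backV V J, dlHolds Q K) :
    ∃ J' ⊆ J, J'.Finite ∧ ∀ K ∈ backV V J', dlHolds Q K := by
  classical
  by_cases hel : ∀ a ∈ J, ∃ q, Elig V a q
  case neg =>
    push_neg at hel
    obtain ⟨a, haJ, hna⟩ := hel
    refine ⟨{a}, by simpa using haJ, Set.finite_singleton a, ?_⟩
    intro K hK
    obtain ⟨c, hc, _⟩ := backV_elim hK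
    exact absurd (hc a rfl) (hna (c a))
  by_contra hcon
  push_neg at hcon
  -- enumeration of J
  haveI : Countable ↥J := hJc.to_subtype
  haveI : Infinite ↥J := hJinf.to_subtype
  haveI : Encodable ↥J := Encodable.ofCountable ↥J
  haveI : Denumerable ↥J := Denumerable.ofEncodableOfInfinite ↥J
  let eJ : ℕ ≃ ↥J := (Denumerable.eqv ↥J).symm
  let pre : ℕ → Set (Atom D) := fun n => {a | ∃ k, k < n ∧ ((eJ k : ↥J) : Atom D) = a}
  have pre_subset : ∀ n, pre n ⊆ J := by
    rintro n a ⟨k, _, rfl⟩; exact (eJ k).2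
  have pre_fin : ∀ n, (pre n).Finite := by
    intro n
    have hsub : pre n ⊆ (fun k => ((eJ k : ↥J) : Atom D)) '' (Set.Iio n) := by
      rintro a ⟨k, hk, rfl⟩; exact ⟨k, hk, rfl⟩
    exact ((Set.finite_Iio n).image _).subset hsub
  have pre_mono : ∀ {m n : ℕ}, m ≤ n → pre m ⊆ pre n := by
    rintro m n hmn a ⟨k, hk, rfl⟩; exact ⟨k, lt_of_lt_of_le hk hmn, rfl⟩
  have pre_succ : ∀ n, pre (n + 1) = insert ((eJ n : ↥J) : Atom D) (pre n) := by
    intro n; ext a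
    constructor
    · rintro ⟨k, hk, rfl⟩
      rcases Nat.lt_succ_iff_lt_or_eq.mp hk with hk | rfl
      · exact Or.inr ⟨k, hk, rfl⟩
      · exact Or.inl rfl
    · rintro (rfl | ⟨k, hk, rfl⟩)
      · exact ⟨n, Nat.lt_succ_self n, rfl⟩
      · exact ⟨k, Nat.lt_succ_of_lt hk, rfl⟩
  have pre_not_mem : ∀ n, ((eJ n : ↥J) : Atom D) ∉ pre n := by
    rintro n ⟨k, hk, hk2⟩
    have h1 : eJ k = eJ n := Subtype.coe_injective hk2
    have h2 := eJ.injective h1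
    omega
  -- default eligible choice
  let d : Atom D → CQ := fun a => if h : ∃ q, Elig V a q then h.choose else ([], [])
  -- the empty prefix is good
  have good0 : KGood V Q pre 0 d := by
    intro m _
    obtain ⟨K, hKmem, hKnot⟩ := hcon (pre m) (pre_subset m) (pre_fin m)
    obtain ⟨c, hc, rfl⟩ := backV_elim hKmem
    refine ⟨c, ⟨hc, hKnot⟩, ?_⟩
    rintro a ⟨k, hk, _⟩
    exact absurd hk (Nat.not_lt_zero k)
  -- the sequence of good choices
  let bb : ∀ n : ℕ, {c : Atom D → CQ // KGood V Q pre n c} :=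
    fun n => Nat.rec ⟨d, good0⟩
      (fun n p => ⟨upd p.1 ((eJ n : ↥J) : Atom D)
          (KGood_step V Q pre pre_mono n _ (pre_not_mem n) (pre_succ n) p.1 p.2).choose,
        (KGood_step V Q pre pre_mono n _ (pre_not_mem n) (pre_succ n) p.1 p.2).choose_spec⟩) n
  let b : ℕ → Atom D → CQ := fun n => (bb n).1
  have hb : ∀ n, KGood V Q pre n (b n) := fun n => (bb n).2
  have hbsucc : ∀ n, ∀ a ∈ pre n, b (n + 1) a = b n a := by
    intro n a ha
    have hane : a ≠ ((eJ n : ↥J) : Atom D) := fun he => pre_not_mem n (he ▸ ha)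
    have hred : b (n + 1) = upd (b n) ((eJ n : ↥J) : Atom D)
        (KGood_step V Q pre pre_mono n _ (pre_not_mem n) (pre_succ n) (b n) (hb n)).choose := rfl
    rw [hred]
    simp [upd, hane]
  have hstab : ∀ n m, n ≤ m → ∀ a ∈ pre n, b m a = b n a := by
    intro n m hnm
    induction m, hnm using Nat.le_induction with
    | base => intro a _; rfl
    | succ m hnm ih =>
      intro a ha
      rw [hbsucc m a (pre_mono hnm ha), ih a ha]
  -- the limit choice
  let cinf : Atom D → CQ :=
    fun a => if h : a ∈ J then b ((eJ.symm ⟨a, h⟩ : ℕ) + 1) a else d a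
  have hcinf : ∀ n, ∀ a ∈ pre n, cinf a = b n a := by
    rintro n a ⟨k, hk, rfl⟩
    have haJ : ((eJ k : ↥J) : Atom D) ∈ J := (eJ k).2
    have hidx : (eJ.symm ⟨((eJ k : ↥J) : Atom D), haJ⟩ : ℕ) = k := by
      rw [show (⟨((eJ k : ↥J) : Atom D), haJ⟩ : ↥J) = eJ k from Subtype.ext rfl,
        Equiv.symm_apply_apply]
    show (if h : ((eJ k : ↥J) : Atom D) ∈ J then
        b ((eJ.symm ⟨((eJ k : ↥J) : Atom D), h⟩ : ℕ) + 1) ((eJ k : ↥J) : Atom D)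
      else d ((eJ k : ↥J) : Atom D)) = b n ((eJ k : ↥J) : Atom D)
    rw [dif_pos haJ, hidx]
    exact (hstab (k + 1) n hk _ ⟨k, Nat.lt_succ_self k, rfl⟩).symm
  have heligcinf : ∀ a ∈ J, Elig V a (cinf a) := by
    intro a ha
    have hapre : a ∈ pre ((eJ.symm ⟨a, ha⟩ : ℕ) + 1) :=
      ⟨(eJ.symm ⟨a, ha⟩ : ℕ), Nat.lt_succ_self _, by simp⟩
    rw [hcinf _ a hapre]
    obtain ⟨c', hfail, hagree⟩ := hb ((eJ.symm ⟨a, ha⟩ : ℕ) + 1) _ le_rfl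
    rw [← hagree a hapre]
    exact hfail.1 a hapre
  -- apply the hypothesis and Datalog compactness
  have hdl : dlHolds Q (Kof cinf J) := h _ (Kof_mem_backV V cinf J heligcinf)
  obtain ⟨K₀, hK₀sub, hK₀fin, hK₀dl⟩ := dlFix_compact Q.1 (Kof cinf J) hdl
  haveI : Finite ↥K₀ := hK₀fin.to_subtype
  have hwit : ∀ u : ↥K₀,
      ∃ a ∈ J, ∃ cc ∈ (cinf a).1, u.1 = mapAtom (backAssign a (cinf a)) cc :=
    fun u => hK₀sub u.2
  choose w hwJ wc hwcmem hweq using hwit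
  let g : ↥K₀ → ℕ := fun u => (eJ.symm ⟨w u, hwJ u⟩ : ℕ) + 1
  obtain ⟨N, hN⟩ := (Set.finite_range g).bddAbove
  have hK₀pre : K₀ ⊆ Kof cinf (pre (N + 1)) := by
    intro u hu
    have hgle : g ⟨u, hu⟩ ≤ N + 1 :=
      le_trans (hN ⟨⟨u, hu⟩, rfl⟩) (Nat.le_succ N)
    have hupre : w ⟨u, hu⟩ ∈ pre (N + 1) := by
      refine pre_mono hgle ?_
      exact ⟨(eJ.symm ⟨w ⟨u, hu⟩, hwJ ⟨u, hu⟩⟩ : ℕ), Nat.lt_succ_self _, by simp⟩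
    exact ⟨w ⟨u, hu⟩, hupre, wc ⟨u, hu⟩, hwcmem ⟨u, hu⟩, hweq ⟨u, hu⟩⟩
  -- contradiction with the failing choice at level N+1
  obtain ⟨c', hfail, hagree⟩ := hb (N + 1) (N + 1) le_rfl
  apply hfail.2
  have heq : Kof c' (pre (N + 1)) = Kof cinf (pre (N + 1)) :=
    Kof_congr (fun a ha => by rw [hagree a ha]; exact (hcinf (N + 1) a ha).symm)
  rw [heq]
  exact dlHolds_mono Q hK₀pre hK₀dl

end MonDetPaper
end
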